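/- arXiv:1803.08462 — 5 statements merged into one kernel-verified Lean document; each statement's English description precedes it below -/
import Mathlib

section
/- If a 3-uniform multihypergraph H with m edges has a 2-cut of size (3/4)·m + x, then H has a 3-cut (partition into three parts) in which the number of edges with exactly one vertex in each part is at least (6/27)·m + (2/27)·x. -/
open scoped Classical
open Finset

lemma cardD {V : Type*} [Fintype V] [DecidableEq V] {p q r : V}
    (hpq : p ≠ q) (hpr : p ≠ r) (hqr : q ≠ r)
    (h : Fin 3 × Fin 3 × Fin 3 → Prop) [DecidablePred h] :
    (Finset.univ.filter (fun g : V → Fin 3 => h (g p, g q, g r))).card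
      = (Finset.univ.filter h).card * 3 ^ (Fintype.card V - 3) := by
  classical
  have E : {g : V → Fin 3 // h (g p, g q, g r)} ≃
      {t : Fin 3 × Fin 3 × Fin 3 // h t} × ({z : V // z ≠ p ∧ z ≠ q ∧ z ≠ r} → Fin 3) := by
    refine ⟨fun g => (⟨(g.1 p, g.1 q, g.1 r), g.2⟩, fun z => g.1 z.1), fun tf =>
      ⟨fun z => if hzp : z = p then tf.1.1.1 else if hzq : z = q then tf.1.1.2.1
        else if hzr : z = r then tf.1.1.2.2 else tf.2 ⟨z, hzp, hzq, hzr⟩, ?_⟩, ?_, ?_⟩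
    · simp [hpq.symm, hpr.symm, hqr.symm, tf.1.2]
    · rintro ⟨g, hg⟩
      ext z
      by_cases h1 : z = p
      · subst h1; simp
      by_cases h2 : z = q
      · subst h2; simp [h1]
      by_cases h3 : z = r
      · subst h3; simp [h1, h2]
      · simp [h1, h2, h3]
    · rintro ⟨⟨t, ht⟩, f⟩
      refine Prod.ext ?_ ?_
      · apply Subtype.ext
        simp [hpq.symm, hpr.symm, hqr.symm]
      · funext z
        obtain ⟨z, hz1, hz2, hz3⟩ := z
        simp [hz1, hz2, hz3]
  have h1 := Fintype.card_congr E
  rw [Fintype.card_subtype, Fintype.card_prod, Fintype.card_subtype, Fintype.card_fun,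
    Fintype.card_fin] at h1
  have h2 : Fintype.card {z : V // z ≠ p ∧ z ≠ q ∧ z ≠ r} = Fintype.card V - 3 := by
    rw [Fintype.card_subtype]
    have : Finset.univ.filter (fun z : V => z ≠ p ∧ z ≠ q ∧ z ≠ r)
        = Finset.univ \ {p, q, r} := by
      ext z; simp [and_assoc]
    rw [this, Finset.card_sdiff_of_subset (Finset.subset_univ _), Finset.card_univ]
    congr 1
    rw [Finset.card_insert_of_notMem (by simp [hpq, hpr]),
      Finset.card_insert_of_notMem (by simp [hqr]), Finset.card_singleton]
  rw [h2] at h1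
  exact h1

def col (a : Fin 3) (c : Fin 2) : Fin 3 := if a = 0 then 2 else c.castSucc

lemma cnt8 : ∀ a b c : Fin 2, ¬(a = b ∧ b = c) →
    8 ≤ (Finset.univ.filter (fun t : Fin 3 × Fin 3 × Fin 3 =>
      ∀ i : Fin 3, col t.1 a = i ∨ col t.2.1 b = i ∨ col t.2.2 c = i)).card := by
  decide

lemma cnt6 : 6 ≤ (Finset.univ.filter (fun t : Fin 3 × Fin 3 × Fin 3 =>
      ∀ i : Fin 3, t.1 = i ∨ t.2.1 = i ∨ t.2.2 = i)).card := by
  decide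

/-- per-edge bound, spanning edge, refinement colouring -/
lemma edgeSpan {V : Type*} [Fintype V] [DecidableEq V] (ω : V → Fin 2)
    (e : Finset V) (he : e.card = 3) (hs : ∃ u ∈ e, ∃ v ∈ e, ω u ≠ ω v) :
    8 * 3 ^ (Fintype.card V - 3) ≤
      (Finset.univ.filter (fun g : V → Fin 3 =>
        ∀ i : Fin 3, ∃ v ∈ e, col (g v) (ω v) = i)).card := by
  obtain ⟨p, q, r, hpq, hpr, hqr, rfl⟩ := Finset.card_eq_three.mp he
  have hfe : (Finset.univ.filter (fun g : V → Fin 3 =>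
      ∀ i : Fin 3, ∃ v ∈ ({p, q, r} : Finset V), col (g v) (ω v) = i))
      = Finset.univ.filter (fun g : V → Fin 3 =>
        (fun t : Fin 3 × Fin 3 × Fin 3 =>
          ∀ i : Fin 3, col t.1 (ω p) = i ∨ col t.2.1 (ω q) = i ∨ col t.2.2 (ω r) = i)
          (g p, g q, g r)) := by
    apply Finset.filter_congr
    intro g _
    simp
  rw [hfe]
  have hD := cardD hpq hpr hqr (fun t : Fin 3 × Fin 3 × Fin 3 =>
    ∀ i : Fin 3, col t.1 (ω p) = i ∨ col t.2.1 (ω q) = i ∨ col t.2.2 (ω r) = i)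
  have hns : ¬(ω p = ω q ∧ ω q = ω r) := by
    rintro ⟨h1, h2⟩
    obtain ⟨u, hu, v, hv, huv⟩ := hs
    have hval : ∀ z ∈ ({p, q, r} : Finset V), ω z = ω p := by
      intro z hz
      rcases Finset.mem_insert.mp hz with h | hz
      · rw [h]
      rcases Finset.mem_insert.mp hz with h | hz
      · rw [h, ← h1]
      · rw [Finset.mem_singleton.mp hz, ← h2, ← h1]
    exact huv ((hval u hu).trans (hval v hv).symm)
  calc 8 * 3 ^ (Fintype.card V - 3)
      ≤ (Finset.univ.filter (fun t : Fin 3 × Fin 3 × Fin 3 =>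
          ∀ i : Fin 3, col t.1 (ω p) = i ∨ col t.2.1 (ω q) = i ∨ col t.2.2 (ω r) = i)).card
          * 3 ^ (Fintype.card V - 3) := Nat.mul_le_mul_right _ (cnt8 _ _ _ hns)
    _ = _ := by rw [← hD]

/-- per-edge bound, any edge, uniform colouring -/
lemma edgeUnif {V : Type*} [Fintype V] [DecidableEq V]
    (e : Finset V) (he : e.card = 3) :
    6 * 3 ^ (Fintype.card V - 3) ≤
      (Finset.univ.filter (fun g : V → Fin 3 =>
        ∀ i : Fin 3, ∃ v ∈ e, g v = i)).card := by
  obtain ⟨p, q, r, hpq, hpr, hqr, rfl⟩ := Finset.card_eq_three.mp he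
  have hfe : (Finset.univ.filter (fun g : V → Fin 3 =>
      ∀ i : Fin 3, ∃ v ∈ ({p, q, r} : Finset V), g v = i))
      = Finset.univ.filter (fun g : V → Fin 3 =>
        (fun t : Fin 3 × Fin 3 × Fin 3 =>
          ∀ i : Fin 3, t.1 = i ∨ t.2.1 = i ∨ t.2.2 = i) (g p, g q, g r)) := by
    apply Finset.filter_congr; intro g _; simp
  rw [hfe]
  have hD := cardD hpq hpr hqr (fun t : Fin 3 × Fin 3 × Fin 3 =>
    ∀ i : Fin 3, t.1 = i ∨ t.2.1 = i ∨ t.2.2 = i)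
  calc 6 * 3 ^ (Fintype.card V - 3)
      ≤ (Finset.univ.filter (fun t : Fin 3 × Fin 3 × Fin 3 =>
          ∀ i : Fin 3, t.1 = i ∨ t.2.1 = i ∨ t.2.2 = i)).card
          * 3 ^ (Fintype.card V - 3) := Nat.mul_le_mul_right _ cnt6
    _ = _ := by rw [← hD]

lemma sumSpan {V : Type*} [Fintype V] [DecidableEq V] (ω : V → Fin 2) :
    ∀ (H : Multiset (Finset V)), (∀ e ∈ H, e.card = 3) →
    8 * 3 ^ (Fintype.card V - 3) * H.countP (fun e => ∃ u ∈ e, ∃ v ∈ e, ω u ≠ ω v)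
      ≤ ∑ g : V → Fin 3, H.countP (fun e => ∀ i : Fin 3, ∃ v ∈ e, col (g v) (ω v) = i) := by
  intro H
  induction H using Multiset.induction_on with
  | empty => simp
  | cons a H ih =>
    intro h3
    have ha := h3 a (Multiset.mem_cons_self a H)
    have ih' := ih (fun e he => h3 e (Multiset.mem_cons_of_mem he))
    simp only [Multiset.countP_cons]
    rw [Finset.sum_add_distrib, Nat.mul_add]
    gcongr
    by_cases hs : ∃ u ∈ a, ∃ v ∈ a, ω u ≠ ω v
    · simp only [hs, if_true, mul_one]
      calc 8 * 3 ^ (Fintype.card V - 3)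
          ≤ (Finset.univ.filter (fun g : V → Fin 3 =>
              ∀ i : Fin 3, ∃ v ∈ a, col (g v) (ω v) = i)).card := edgeSpan ω a ha hs
        _ = ∑ g : V → Fin 3, if (∀ i : Fin 3, ∃ v ∈ a, col (g v) (ω v) = i) then 1 else 0 := by
            rw [Finset.card_filter]
    · simp [hs]

lemma sumUnif {V : Type*} [Fintype V] [DecidableEq V] :
    ∀ (H : Multiset (Finset V)), (∀ e ∈ H, e.card = 3) →
    6 * 3 ^ (Fintype.card V - 3) * Multiset.card H
      ≤ ∑ g : V → Fin 3, H.countP (fun e => ∀ i : Fin 3, ∃ v ∈ e, g v = i) := by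
  intro H
  induction H using Multiset.induction_on with
  | empty => simp
  | cons a H ih =>
    intro h3
    have ha := h3 a (Multiset.mem_cons_self a H)
    have ih' := ih (fun e he => h3 e (Multiset.mem_cons_of_mem he))
    simp only [Multiset.countP_cons, Multiset.card_cons]
    rw [Finset.sum_add_distrib, Nat.mul_add]
    gcongr
    calc 6 * 3 ^ (Fintype.card V - 3) * 1
        = 6 * 3 ^ (Fintype.card V - 3) := by ring
      _ ≤ (Finset.univ.filter (fun g : V → Fin 3 =>
            ∀ i : Fin 3, ∃ v ∈ a, g v = i)).card := edgeUnif a ha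
      _ = ∑ g : V → Fin 3, if (∀ i : Fin 3, ∃ v ∈ a, g v = i) then 1 else 0 := by
          rw [Finset.card_filter]

/-- If a 3-uniform multihypergraph with m edges has a 2-cut of size (3/4)m + x,
then it has a 3-cut of size at least (6/27)m + (2/27)x. -/
theorem stmt_4 {V : Type*} [Fintype V] [DecidableEq V]
    (H : Multiset (Finset V)) (h3 : ∀ e ∈ H, e.card = 3)
    (x : ℚ) (ω : V → Fin 2)
    (hcut : (H.countP (fun e => ∃ u ∈ e, ∃ v ∈ e, ω u ≠ ω v) : ℚ)
      = 3 / 4 * H.card + x) :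
    ∃ σ : V → Fin 3,
      (H.countP (fun e => ∀ i : Fin 3, ∃ v ∈ e, σ v = i) : ℚ)
        ≥ 6 / 27 * H.card + 2 / 27 * x := by
  by_cases hH : H = 0
  · subst hH
    refine ⟨fun _ => 0, ?_⟩
    simp only [Multiset.countP_zero, Multiset.card_zero, Nat.cast_zero, mul_zero, zero_add] at hcut ⊢
    have : x = 0 := by linarith
    simp [this]
  -- n ≥ 3
  obtain ⟨e0, he0⟩ := Multiset.exists_mem_of_ne_zero hH
  have hn3 : 3 ≤ Fintype.card V := by
    rw [← h3 e0 he0]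
    exact Finset.card_le_univ e0
  set n := Fintype.card V with hn
  have hpow : (3 : ℚ) ^ n = 27 * 3 ^ (n - 3) := by
    have : n = (n - 3) + 3 := by omega
    rw [this]
    push_cast [pow_add]
    ring
  have hcard : (Fintype.card (V → Fin 3) : ℚ) = 3 ^ n := by
    rw [Fintype.card_fun, Fintype.card_fin]
    push_cast
    rfl
  set T : ℚ := 6 / 27 * H.card + 2 / 27 * x with hT
  -- key averaging step
  have key : ∀ (c : (V → Fin 3) → ℕ) (B : ℕ),
      (B ≤ ∑ g : V → Fin 3, c g) → ((3:ℚ) ^ n * T ≤ B) → ∃ g, T ≤ (c g : ℚ) := by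
    intro c B hB hBT
    by_contra hcon
    push_neg at hcon
    have h1 : ∑ g : V → Fin 3, (c g : ℚ) < ∑ _g : V → Fin 3, T := by
      apply Finset.sum_lt_sum_of_nonempty
      · exact Finset.univ_nonempty
      · intro g _; exact hcon g
    rw [Finset.sum_const, Finset.card_univ, nsmul_eq_mul, hcard] at h1
    have h2 : (B : ℚ) ≤ ∑ g : V → Fin 3, (c g : ℚ) := by
      push_cast [← Nat.cast_sum]
      exact_mod_cast hB
    linarith
  by_cases hx : 0 ≤ x
  · -- refinement of the given 2-cut
    obtain ⟨g, hg⟩ := key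
      (fun g => H.countP (fun e => ∀ i : Fin 3, ∃ v ∈ e, col (g v) (ω v) = i))
      (8 * 3 ^ (n - 3) * H.countP (fun e => ∃ u ∈ e, ∃ v ∈ e, ω u ≠ ω v))
      (sumSpan ω H h3)
      (by
        push_cast
        rw [hcut, hpow, hT]
        ring_nf
        nlinarith [pow_pos (show (0:ℚ) < 3 by norm_num) (n - 3)])
    exact ⟨fun v => col (g v) (ω v), hg⟩
  · -- uniform random 3-colouring
    push_neg at hx
    obtain ⟨g, hg⟩ := key
      (fun g => H.countP (fun e => ∀ i : Fin 3, ∃ v ∈ e, g v = i))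
      (6 * 3 ^ (n - 3) * Multiset.card H)
      (sumUnif H h3)
      (by
        push_cast
        rw [hpow, hT]
        nlinarith [pow_pos (show (0:ℚ) < 3 by norm_num) (n - 3)])
    exact ⟨g, hg⟩
end

section
/- Let H be a multihypergraph and V' a subset of its vertices such that every edge intersects V' in at most two vertices. Define a weighted graph R on V' where the weight between u,v ∈ V' is η_{u,v} = Σ_e 2^{2−|e|}, summed over edges e of H intersecting V' in exactly {u,v}. Then for any assignment ω: V' → {1,2}, the excess of ω as a cut of R (weight of cut edges minus expected weight under a uniformly random cut) equals the average excess of ω as a V'-partial 2-cut of H. -/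
open scoped Classical

lemma card_ext {V : Type*} [Fintype V] [DecidableEq V] (A : Finset V) (f : V → Fin 2) :
    (Finset.univ.filter (fun τ : V → Fin 2 => ∀ v ∈ A, τ v = f v)).card
      = 2 ^ (Finset.univ \ A).card := by
  classical
  have e : {τ : V → Fin 2 // ∀ v ∈ A, τ v = f v} ≃ ({x // x ∈ Finset.univ \ A} → Fin 2) :=
    { toFun := fun τ x => τ.1 x.1
      invFun := fun g => ⟨fun v => if h : v ∈ A then f v else g ⟨v, by simp [h]⟩,
        fun v hv => by simp [hv]⟩
      left_inv := by
        rintro ⟨τ, hτ⟩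
        ext v
        dsimp only
        split_ifs with h
        · exact congrArg Fin.val (hτ v h).symm
        · rfl
      right_inv := by
        intro g
        ext x
        have hx := (Finset.mem_sdiff.mp x.2).2
        simp [hx] }
  calc (Finset.univ.filter (fun τ : V → Fin 2 => ∀ v ∈ A, τ v = f v)).card
      = Fintype.card {τ : V → Fin 2 // ∀ v ∈ A, τ v = f v} := (Fintype.card_subtype _).symm
    _ = 2 ^ (Finset.univ \ A).card := by
        rw [Fintype.card_congr e, Fintype.card_fun, Fintype.card_coe, Fintype.card_fin]

lemma count_forced {V : Type*} [Fintype V] [DecidableEq V] (V' e : Finset V)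
    (ω : V → Fin 2) (c : Fin 2) :
    ((Finset.univ.filter (fun τ : V → Fin 2 => ∀ v ∈ V', τ v = ω v)).filter
        (fun τ => ∀ a ∈ e, τ a = c)).card
      = if (∀ v ∈ e ∩ V', ω v = c) then 2 ^ (Finset.univ \ (V' ∪ e)).card else 0 := by
  classical
  rw [Finset.filter_filter]
  split_ifs with h
  · rw [← card_ext (V' ∪ e) (fun v => if v ∈ V' then ω v else c)]
    congr 1
    apply Finset.filter_congr
    intro τ _
    constructor
    · rintro ⟨h1, h2⟩ v hv
      rcases Finset.mem_union.mp hv with hv' | hv'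
      · simp [hv', h1 v hv']
      · by_cases hV : v ∈ V'
        · simp [hV, h1 v hV]
        · simp [hV, h2 v hv']
    · intro hτ
      refine ⟨fun v hv => ?_, fun a ha => ?_⟩
      · simpa [hv] using hτ v (Finset.mem_union_left _ hv)
      · by_cases hV : a ∈ V'
        · have := hτ a (Finset.mem_union_left _ hV)
          simp only [hV, if_pos] at this
          rw [this, h a (Finset.mem_inter.mpr ⟨ha, hV⟩)]
        · simpa [hV] using hτ a (Finset.mem_union_right _ ha)
  · rw [Finset.card_eq_zero, Finset.filter_eq_empty_iff]
    push_neg at h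
    obtain ⟨v, hv, hvc⟩ := h
    rintro τ - ⟨h1, h2⟩
    exact hvc ((h1 v (Finset.mem_inter.mp hv).2).symm.trans (h2 v (Finset.mem_inter.mp hv).1))

lemma cnt_eq {V : Type*} [Fintype V] [DecidableEq V] (V' e : Finset V)
    (he : e.Nonempty) (ω : V → Fin 2) :
    ((Finset.univ.filter (fun τ : V → Fin 2 => ∀ v ∈ V', τ v = ω v)).filter
        (fun τ => ∃ a ∈ e, ∃ b ∈ e, τ a ≠ τ b)).card
      + ((if ∀ v ∈ e ∩ V', ω v = 0 then 2 ^ (Finset.univ \ (V' ∪ e)).card else 0)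
        + (if ∀ v ∈ e ∩ V', ω v = 1 then 2 ^ (Finset.univ \ (V' ∪ e)).card else 0))
      = 2 ^ (Finset.univ \ V').card := by
  classical
  set S := Finset.univ.filter (fun τ : V → Fin 2 => ∀ v ∈ V', τ v = ω v) with hS
  obtain ⟨x, hx⟩ := he
  have h2 : ∀ i : Fin 2, i = 0 ∨ i = 1 := by decide
  have hneg : S.filter (fun τ => ¬ ∃ a ∈ e, ∃ b ∈ e, τ a ≠ τ b)
      = (S.filter (fun τ => ∀ a ∈ e, τ a = 0)) ∪ (S.filter (fun τ => ∀ a ∈ e, τ a = 1)) := by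
    rw [← Finset.filter_or]
    apply Finset.filter_congr
    intro τ _
    push_neg
    constructor
    · intro hmono
      rcases h2 (τ x) with h0 | h0
      · exact Or.inl (fun a ha => (hmono a ha x hx).trans h0)
      · exact Or.inr (fun a ha => (hmono a ha x hx).trans h0)
    · rintro (hc | hc) a ha b hb
      · rw [hc a ha, hc b hb]
      · rw [hc a ha, hc b hb]
  have hdisj : Disjoint (S.filter (fun τ => ∀ a ∈ e, τ a = 0))
      (S.filter (fun τ => ∀ a ∈ e, τ a = 1)) := by
    rw [Finset.disjoint_left]
    intro τ h0 h1
    have := ((Finset.mem_filter.mp h0).2 x hx).symm.trans ((Finset.mem_filter.mp h1).2 x hx)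
    exact absurd this (by decide)
  have hpart := Finset.card_filter_add_card_filter_not
    (s := S) (p := fun τ => ∃ a ∈ e, ∃ b ∈ e, τ a ≠ τ b)
  rw [hneg, Finset.card_union_of_disjoint hdisj, count_forced, count_forced] at hpart
  have hS2 : S.card = 2 ^ (Finset.univ \ V').card := card_ext V' ω
  generalize hA : (if ∀ v ∈ e ∩ V', ω v = 0 then 2 ^ (Finset.univ \ (V' ∪ e)).card else 0) = A at *
  generalize hB : (if ∀ v ∈ e ∩ V', ω v = 1 then 2 ^ (Finset.univ \ (V' ∪ e)).card else 0) = B at *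
  clear hneg hdisj h2 hx hS hA hB
  revert hpart hS2
  clear_value S
  exact fun h1 h2 => h2.trans h1

lemma finset_pair_eq {V : Type*} [DecidableEq V] {a b u v : V} (hab : a ≠ b) (huv : u ≠ v) :
    ({a, b} : Finset V) = {u, v} ↔ (u = a ∧ v = b) ∨ (u = b ∧ v = a) := by
  constructor
  · intro h
    have hu : u ∈ ({a, b} : Finset V) := h ▸ Finset.mem_insert_self u {v}
    have hv : v ∈ ({a, b} : Finset V) := h ▸ Finset.mem_insert_of_mem (Finset.mem_singleton_self v)
    simp only [Finset.mem_insert, Finset.mem_singleton] at hu hv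
    rcases hu with rfl | rfl <;> rcases hv with rfl | rfl
    · exact absurd rfl huv
    · exact Or.inl ⟨rfl, rfl⟩
    · exact Or.inr ⟨rfl, rfl⟩
    · exact absurd rfl huv
  · rintro (⟨rfl, rfl⟩ | ⟨rfl, rfl⟩)
    · rfl
    · exact Finset.pair_comm _ _

lemma sum_pair {V : Type*} [DecidableEq V] (V' : Finset V) (a b : V)
    (ha : a ∈ V') (hb : b ∈ V') (w : ℚ) :
    ∑ u ∈ V', ∑ v ∈ V', (if u = a ∧ v = b then w else 0) = w := by
  have h : ∀ u ∈ V', ∑ v ∈ V', (if u = a ∧ v = b then w else 0)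
      = (if u = a then w else 0) := by
    intro u _
    by_cases h : u = a
    · subst h
      simp [hb]
    · simp [h]
  rw [Finset.sum_congr rfl h]
  simp [ha]

lemma peredge {V : Type*} [Fintype V] [DecidableEq V] (V' : Finset V) (ω : V → Fin 2)
    (e : Finset V) (he : e.Nonempty) (hcard : (e ∩ V').card ≤ 2) :
    ((1 : ℚ) / 2) * ∑ u ∈ V', ∑ v ∈ V',
        (if u ≠ v ∧ ω u ≠ ω v then (if e ∩ V' = {u, v} then (4 : ℚ) / 2 ^ e.card else 0) else 0)
      - (1 / 2) * ((1 / 2) * ∑ u ∈ V', ∑ v ∈ V',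
        (if u ≠ v then (if e ∩ V' = {u, v} then (4 : ℚ) / 2 ^ e.card else 0) else 0))
    = (((Finset.univ.filter (fun τ : V → Fin 2 => ∀ v ∈ V', τ v = ω v)).filter
          (fun τ => ∃ a ∈ e, ∃ b ∈ e, τ a ≠ τ b)).card : ℚ) / 2 ^ ((Finset.univ \ V').card)
      - (1 - 2 / (2 : ℚ) ^ e.card) := by
  classical
  set N := (Finset.univ \ V').card with hN
  set m := (e \ V').card with hm
  set cnt := ((Finset.univ.filter (fun τ : V → Fin 2 => ∀ v ∈ V', τ v = ω v)).filter
          (fun τ => ∃ a ∈ e, ∃ b ∈ e, τ a ≠ τ b)).card with hcnt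
  -- cardinality bookkeeping
  have hsd : Finset.univ \ (V' ∪ e) = (Finset.univ \ V') \ e := by
    ext x; simp [not_or]
  have hie : (Finset.univ \ V') ∩ e = e \ V' := by
    ext x; simp [and_comm]
  have hNm : (Finset.univ \ (V' ∪ e)).card + m = N := by
    rw [hsd, hm, ← hie]
    exact Finset.card_sdiff_add_card_inter _ _
  have hec : m + (e ∩ V').card = e.card := Finset.card_sdiff_add_card_inter e V'
  have hpow : (2 : ℚ) ^ (Finset.univ \ (V' ∪ e)).card * 2 ^ m = 2 ^ N := by
    rw [← pow_add, hNm]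
  have hNpos : (0:ℚ) < 2 ^ N := by positivity
  have hcq := cnt_eq V' e he ω
  -- cast to ℚ
  have hcqQ : (cnt : ℚ)
      + ((if ∀ v ∈ e ∩ V', ω v = 0 then ((2:ℚ) ^ (Finset.univ \ (V' ∪ e)).card) else 0)
        + (if ∀ v ∈ e ∩ V', ω v = 1 then ((2:ℚ) ^ (Finset.univ \ (V' ∪ e)).card) else 0))
      = 2 ^ N := by
    have := congrArg (fun n : ℕ => (n : ℚ)) hcq
    push_cast at this
    simpa [hcnt, hN, apply_ite (fun n : ℕ => (n : ℚ))] using this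
  have hz : ∀ u v : V, u ≠ v → (e ∩ V').card ≤ 1 →
      (if e ∩ V' = {u, v} then (4 : ℚ) / 2 ^ e.card else 0) = 0 := by
    intro u v huv hk
    rw [if_neg]
    intro h2
    have h3 := Finset.card_pair huv
    rw [← h2] at h3
    rw [h3] at hk
    exact absurd hk (by norm_num)
  have hz : ∀ u v : V, u ≠ v → (e ∩ V').card ≤ 1 →
      (if e ∩ V' = {u, v} then (4 : ℚ) / 2 ^ e.card else 0) = 0 := by
    intro u v huv hk
    rw [if_neg]
    intro h2
    have h3 := Finset.card_pair huv
    rw [← h2] at h3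
    rw [h3] at hk
    exact absurd hk (by norm_num)
  interval_cases h : (e ∩ V').card
  · -- |e ∩ V'| = 0
    have h0 : e ∩ V' = ∅ := Finset.card_eq_zero.mp h
    have hs1 : ∑ u ∈ V', ∑ v ∈ V',
        (if u ≠ v ∧ ω u ≠ ω v then (if e ∩ V' = {u, v} then (4 : ℚ) / 2 ^ e.card else 0) else 0) = 0 := by
      refine Finset.sum_eq_zero fun u _ => Finset.sum_eq_zero fun v _ => ?_
      by_cases h1 : u ≠ v ∧ ω u ≠ ω v
      · rw [if_pos h1]; exact hz u v h1.1 (by norm_num)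
      · rw [if_neg h1]
    have hs2 : ∑ u ∈ V', ∑ v ∈ V',
        (if u ≠ v then (if e ∩ V' = {u, v} then (4 : ℚ) / 2 ^ e.card else 0) else 0) = 0 := by
      refine Finset.sum_eq_zero fun u _ => Finset.sum_eq_zero fun v _ => ?_
      by_cases h1 : u ≠ v
      · rw [if_pos h1]; exact hz u v h1 (by norm_num)
      · rw [if_neg h1]
    rw [hs1, hs2]
    rw [h0] at hcqQ
    simp only [Finset.notMem_empty, false_implies, implies_true, if_true] at hcqQ
    have hecard : e.card = m := by rw [← hec, Nat.add_zero]
    have hcv : (cnt : ℚ) = 2 ^ N - (2 ^ (Finset.univ \ (V' ∪ e)).card + 2 ^ (Finset.univ \ (V' ∪ e)).card) := by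
      linarith
    rw [hcv, hecard]
    have hm0 : (2:ℚ) ^ m ≠ 0 := by positivity
    have hN0 : (2:ℚ) ^ N ≠ 0 := by positivity
    rw [← hpow]
    field_simp
    ring
  · -- |e ∩ V'| = 1
    obtain ⟨a, ha⟩ := Finset.card_eq_one.mp h
    have hs1 : ∑ u ∈ V', ∑ v ∈ V',
        (if u ≠ v ∧ ω u ≠ ω v then (if e ∩ V' = {u, v} then (4 : ℚ) / 2 ^ e.card else 0) else 0) = 0 := by
      refine Finset.sum_eq_zero fun u _ => Finset.sum_eq_zero fun v _ => ?_
      by_cases h1 : u ≠ v ∧ ω u ≠ ω v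
      · rw [if_pos h1]; exact hz u v h1.1 (by norm_num)
      · rw [if_neg h1]
    have hs2 : ∑ u ∈ V', ∑ v ∈ V',
        (if u ≠ v then (if e ∩ V' = {u, v} then (4 : ℚ) / 2 ^ e.card else 0) else 0) = 0 := by
      refine Finset.sum_eq_zero fun u _ => Finset.sum_eq_zero fun v _ => ?_
      by_cases h1 : u ≠ v
      · rw [if_pos h1]; exact hz u v h1 (by norm_num)
      · rw [if_neg h1]
    rw [hs1, hs2]
    rw [ha] at hcqQ
    simp only [Finset.mem_singleton, forall_eq] at hcqQ
    have hecard : e.card = m + 1 := hec.symm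
    have h01 : ω a = 0 ∨ ω a = 1 := by
      rcases (show ∀ i : Fin 2, i = 0 ∨ i = 1 by decide) (ω a) with h' | h'
      · exact Or.inl h'
      · exact Or.inr h'
    have hcv : (cnt : ℚ) = 2 ^ N - 2 ^ (Finset.univ \ (V' ∪ e)).card := by
      rcases h01 with h' | h'
      · rw [if_pos h', if_neg (fun h'' => absurd (h''.symm.trans h') (by decide))] at hcqQ
        linarith
      · rw [if_pos h', if_neg (fun h'' => absurd (h''.symm.trans h') (by decide))] at hcqQ
        linarith
    rw [hcv, hecard]
    have hm0 : (2:ℚ) ^ m ≠ 0 := by positivity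
    have hN0 : (2:ℚ) ^ N ≠ 0 := by positivity
    rw [← hpow, pow_succ]
    field_simp
    ring
  · -- |e ∩ V'| = 2
    obtain ⟨a, b, hab, hab2⟩ := Finset.card_eq_two.mp h
    have haeV : a ∈ e ∩ V' := by rw [hab2]; exact Finset.mem_insert_self _ _
    have hbeV : b ∈ e ∩ V' := by
      rw [hab2]; exact Finset.mem_insert_of_mem (Finset.mem_singleton_self _)
    have ha : a ∈ V' := (Finset.mem_inter.mp haeV).2
    have hb : b ∈ V' := (Finset.mem_inter.mp hbeV).2
    set w : ℚ := (4 : ℚ) / 2 ^ e.card with hw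
    have hecard : e.card = m + 2 := hec.symm
    have key2 : ∀ u v : V,
        (if u ≠ v then (if e ∩ V' = {u, v} then w else 0) else 0)
          = (if u = a ∧ v = b then w else 0) + (if u = b ∧ v = a then w else 0) := by
      intro u v
      by_cases huv : u = v
      · subst huv
        have n1 : ¬(u = a ∧ u = b) := fun h' => hab (h'.1.symm.trans h'.2)
        have n2 : ¬(u = b ∧ u = a) := fun h' => hab (h'.2.symm.trans h'.1)
        rw [if_neg (by simp), if_neg n1, if_neg n2, add_zero]
      · rw [if_pos huv, hab2]
        by_cases hc : (u = a ∧ v = b) ∨ (u = b ∧ v = a)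
        · rw [if_pos ((finset_pair_eq hab huv).mpr hc)]
          obtain ⟨h1, h2⟩ | ⟨h1, h2⟩ := hc
          · rw [if_pos ⟨h1, h2⟩, if_neg (fun h' => hab (h1.symm.trans h'.1)), add_zero]
          · rw [if_neg (fun h' => hab (h'.1.symm.trans h1)), if_pos ⟨h1, h2⟩, zero_add]
        · rw [if_neg (fun h' => hc ((finset_pair_eq hab huv).mp h')),
            if_neg (fun h' => hc (Or.inl h')), if_neg (fun h' => hc (Or.inr h')), add_zero]
    have hS2 : ∑ u ∈ V', ∑ v ∈ V',
        (if u ≠ v then (if e ∩ V' = {u, v} then w else 0) else 0) = 2 * w := by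
      rw [Finset.sum_congr rfl (fun u _ => Finset.sum_congr rfl (fun v _ => key2 u v))]
      rw [Finset.sum_congr rfl (fun u _ => Finset.sum_add_distrib), Finset.sum_add_distrib,
        sum_pair V' a b ha hb w, sum_pair V' b a hb ha w]
      ring
    rw [hab2] at hcqQ
    simp only [Finset.mem_insert, Finset.mem_singleton, forall_eq_or_imp, forall_eq] at hcqQ
    have hm0 : (2:ℚ) ^ m ≠ 0 := by positivity
    have hN0 : (2:ℚ) ^ N ≠ 0 := by positivity
    by_cases hω : ω a = ω b
    · have hS1 : ∑ u ∈ V', ∑ v ∈ V',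
          (if u ≠ v ∧ ω u ≠ ω v then (if e ∩ V' = {u, v} then w else 0) else 0) = 0 := by
        refine Finset.sum_eq_zero fun u _ => Finset.sum_eq_zero fun v _ => ?_
        by_cases h1 : u ≠ v ∧ ω u ≠ ω v
        · rw [if_pos h1, if_neg]
          rw [hab2]
          intro h'
          rcases (finset_pair_eq hab h1.1).mp h' with ⟨hx, hy⟩ | ⟨hx, hy⟩
          · exact h1.2 (hx ▸ hy ▸ hω)
          · exact h1.2 (hx ▸ hy ▸ hω.symm)
        · rw [if_neg h1]
      rw [hS1, hS2]
      have h01 : ω a = 0 ∨ ω a = 1 := by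
        rcases (show ∀ i : Fin 2, i = 0 ∨ i = 1 by decide) (ω a) with h' | h'
        · exact Or.inl h'
        · exact Or.inr h'
      have hcv : (cnt : ℚ) = 2 ^ N - 2 ^ (Finset.univ \ (V' ∪ e)).card := by
        rcases h01 with h' | h'
        · have hb' : ω b = 0 := hω.symm.trans h'
          rw [if_pos ⟨h', hb'⟩, if_neg (fun h'' => absurd (h''.1.symm.trans h') (by decide))] at hcqQ
          linarith
        · have hb' : ω b = 1 := hω.symm.trans h'
          rw [if_neg (fun h'' => absurd (h''.1.symm.trans h') (by decide)), if_pos ⟨h', hb'⟩] at hcqQ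
          linarith
      rw [hcv, hw, hecard]
      rw [← hpow]
      field_simp
      ring
    · have hS1 : ∑ u ∈ V', ∑ v ∈ V',
          (if u ≠ v ∧ ω u ≠ ω v then (if e ∩ V' = {u, v} then w else 0) else 0) = 2 * w := by
        have key1 : ∀ u v : V,
            (if u ≠ v ∧ ω u ≠ ω v then (if e ∩ V' = {u, v} then w else 0) else 0)
              = (if u = a ∧ v = b then w else 0) + (if u = b ∧ v = a then w else 0) := by
          intro u v
          by_cases h1 : u ≠ v ∧ ω u ≠ ω v
          · rw [if_pos h1, ← key2 u v, if_pos h1.1]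
          · have n1 : ¬(u = a ∧ v = b) := by
              rintro ⟨rfl, rfl⟩; exact h1 ⟨fun h' => hab h', hω⟩
            have n2 : ¬(u = b ∧ v = a) := by
              rintro ⟨rfl, rfl⟩; exact h1 ⟨fun h' => hab h'.symm, fun h' => hω h'.symm⟩
            rw [if_neg h1, if_neg n1, if_neg n2, add_zero]
        rw [Finset.sum_congr rfl (fun u _ => Finset.sum_congr rfl (fun v _ => key1 u v))]
        rw [Finset.sum_congr rfl (fun u _ => Finset.sum_add_distrib), Finset.sum_add_distrib,
          sum_pair V' a b ha hb w, sum_pair V' b a hb ha w]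
        ring
      rw [hS1, hS2]
      have hcv : (cnt : ℚ) = 2 ^ N := by
        rw [if_neg (fun h'' => hω (h''.1.trans h''.2.symm)),
          if_neg (fun h'' => hω (h''.1.trans h''.2.symm))] at hcqQ
        linarith
      rw [hcv, hw, hecard]
      rw [← hpow]
      field_simp
      ring

lemma filter_map_sum_cons {V : Type*} [DecidableEq V] (a : Finset V) (H : Multiset (Finset V))
    (p : Finset V → Prop) [DecidablePred p] (f : Finset V → ℚ) :
    (((a ::ₘ H).filter p).map f).sum = (if p a then f a else 0) + ((H.filter p).map f).sum := by
  rw [Multiset.filter_cons, Multiset.map_add, Multiset.sum_add]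
  congr 1
  split_ifs <;> simp

lemma ite_split {c : Prop} [Decidable c] (x y : ℚ) :
    (if c then x + y else 0) = (if c then x else 0) + (if c then y else 0) := by
  split_ifs <;> simp

lemma aux_sum {V : Type*} [Fintype V] [DecidableEq V]
    (V' : Finset V) (ω : V → Fin 2) (H : Multiset (Finset V))
    (hne : ∀ e ∈ H, e.Nonempty)
    (hint : ∀ e ∈ H, (e ∩ V').card ≤ 2) :
    ((1 : ℚ) / 2) * ∑ u ∈ V', ∑ v ∈ V', (if u ≠ v ∧ ω u ≠ ω v then
        ((H.filter (fun e => e ∩ V' = {u, v})).map (fun e => (4 : ℚ) / 2 ^ e.card)).sum else 0)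
      - (1 / 2) * ((1 / 2) * ∑ u ∈ V', ∑ v ∈ V', (if u ≠ v then
        ((H.filter (fun e => e ∩ V' = {u, v})).map (fun e => (4 : ℚ) / 2 ^ e.card)).sum else 0))
    = (∑ τ ∈ Finset.univ.filter (fun τ : V → Fin 2 => ∀ v ∈ V', τ v = ω v),
          (H.countP (fun e => ∃ a ∈ e, ∃ b ∈ e, τ a ≠ τ b) : ℚ))
        / 2 ^ ((Finset.univ \ V').card)
      - (H.map (fun e => 1 - 2 / (2 : ℚ) ^ e.card)).sum := by
  classical
  induction H using Multiset.induction_on with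
  | empty => simp
  | cons a H ih =>
    have hane : a.Nonempty := hne a (Multiset.mem_cons_self a H)
    have haint : (a ∩ V').card ≤ 2 := hint a (Multiset.mem_cons_self a H)
    have hne' : ∀ e ∈ H, e.Nonempty := fun e he => hne e (Multiset.mem_cons_of_mem he)
    have hint' : ∀ e ∈ H, (e ∩ V').card ≤ 2 := fun e he => hint e (Multiset.mem_cons_of_mem he)
    have ih' := ih hne' hint'
    have hpe := peredge V' ω a hane haint
    simp only [filter_map_sum_cons, ite_split, Finset.sum_add_distrib,
      Multiset.countP_cons, Multiset.map_cons, Multiset.sum_cons] at *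
    push_cast at *
    rw [Finset.sum_add_distrib, add_div]
    rw [Finset.sum_boole] at *
    linarith [ih', hpe]

/-- For a multihypergraph H and V' ⊆ V(H) with every edge meeting V' in at most two
vertices, the excess of any assignment ω on V' as a cut of the weighted graph R
(weights η_{u,v} = Σ_e 2^{2−|e|} over edges with e ∩ V' = {u,v}) equals the average
excess of ω as a V'-partial 2-cut of H. -/
theorem stmt_9 {V : Type*} [Fintype V] [DecidableEq V]
    (H : Multiset (Finset V)) (V' : Finset V)
    (hne : ∀ e ∈ H, e.Nonempty)
    (hint : ∀ e ∈ H, (e ∩ V').card ≤ 2)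
    (η : V → V → ℚ)
    (hη : ∀ u v, u ≠ v → η u v =
      ((H.filter (fun e => e ∩ V' = {u, v})).map (fun e => (4 : ℚ) / 2 ^ e.card)).sum)
    (ω : V → Fin 2) :
    ((1 : ℚ) / 2) * ∑ u ∈ V', ∑ v ∈ V', (if u ≠ v ∧ ω u ≠ ω v then η u v else 0)
      - (1 / 2) * ((1 / 2) * ∑ u ∈ V', ∑ v ∈ V', (if u ≠ v then η u v else 0))
    = (∑ τ ∈ Finset.univ.filter (fun τ : V → Fin 2 => ∀ v ∈ V', τ v = ω v),
          (H.countP (fun e => ∃ a ∈ e, ∃ b ∈ e, τ a ≠ τ b) : ℚ))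
        / 2 ^ ((Finset.univ \ V').card)
      - (H.map (fun e => 1 - 2 / (2 : ℚ) ^ e.card)).sum := by
  have e1 : ∑ u ∈ V', ∑ v ∈ V', (if u ≠ v ∧ ω u ≠ ω v then η u v else 0)
      = ∑ u ∈ V', ∑ v ∈ V', (if u ≠ v ∧ ω u ≠ ω v then
          ((H.filter (fun e => e ∩ V' = {u, v})).map (fun e => (4 : ℚ) / 2 ^ e.card)).sum else 0) :=
    Finset.sum_congr rfl fun u _ => Finset.sum_congr rfl fun v _ => by
      split_ifs with h
      · exact hη u v h.1
      · rfl
  have e2 : ∑ u ∈ V', ∑ v ∈ V', (if u ≠ v then η u v else 0)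
      = ∑ u ∈ V', ∑ v ∈ V', (if u ≠ v then
          ((H.filter (fun e => e ∩ V' = {u, v})).map (fun e => (4 : ℚ) / 2 ^ e.card)).sum else 0) :=
    Finset.sum_congr rfl fun u _ => Finset.sum_congr rfl fun v _ => by
      split_ifs with h
      · exact hη u v h
      · rfl
  rw [e1, e2]
  exact aux_sum V' ω H hne hint
end

section
/- Let H be a mixed multihypergraph and V₁,...,V_t disjoint vertex subsets such that every edge f of H has vertices in at least |f| − 1 distinct parts Vᵢ (after extending with singletons to a partition of V(H)). If for each i there is a Vᵢ-partial 2-cut of H with average excess xᵢ, then H has a full 2-cut with excess at least Σᵢ xᵢ. -/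
open scoped Classical

open Finset

private lemma sum_pi_fin2 {ι : Type*} [Fintype ι] [DecidableEq ι] (f : ι → Fin 2 → ℚ) :
    ∑ τ : ι → Fin 2, ∏ v, f v (τ v) = ∏ v, (f v 0 + f v 1) := by
  rw [← Fintype.piFinset_univ, ← Finset.prod_univ_sum]
  simp [Fin.sum_univ_two]

private lemma prod_ite_card {α : Type*} [Fintype α] [DecidableEq α] (s : Finset α) (c : ℚ) :
    ∏ v, (if v ∈ s then (1:ℚ) else c) = c ^ ((Finset.univ \ s).card) := by
  rw [Finset.prod_ite, Finset.prod_const, Finset.prod_const, one_pow, one_mul]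
  congr 1
  rw [Finset.sdiff_eq_filter]

private lemma ind_sum_one (x : Fin 2) : ∑ d : Fin 2, (if x = d then (1:ℚ) else 0) = 1 := by
  fin_cases x <;> simp [Fin.sum_univ_two]

private lemma count_agree {V : Type*} [Fintype V] [DecidableEq V] (s : Finset V) (ω : V → Fin 2) :
    ∑ τ : V → Fin 2, (if ∀ v ∈ s, τ v = ω v then (1:ℚ) else 0)
      = 2 ^ ((Finset.univ \ s).card) := by
  have h1 : ∀ τ : V → Fin 2, (if ∀ v ∈ s, τ v = ω v then (1:ℚ) else 0)
      = ∏ v, (if v ∈ s then (if τ v = ω v then (1:ℚ) else 0) else 1) := by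
    intro τ
    rw [Finset.prod_ite_mem, Finset.univ_inter, Finset.prod_boole]
    split_ifs <;> rfl
  simp_rw [h1]
  rw [sum_pi_fin2 (fun v y => if v ∈ s then (if y = ω v then (1:ℚ) else 0) else 1)]
  rw [← prod_ite_card s 2]
  apply Finset.prod_congr rfl
  intro v _
  by_cases hv : v ∈ s
  · simp only [if_pos hv]
    have h2 : ω v = 0 ∨ ω v = 1 := by omega
    rcases h2 with h2 | h2 <;> simp [h2]
  · norm_num [hv]

private noncomputable def comb {V : Type*} [Fintype V] [DecidableEq V] {t : ℕ}
    (W : Fin t → Finset V) (σ : Fin t → V → Fin 2)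
    (ε : Fin t → Fin 2) (ρ : V → Fin 2) (v : V) : Fin 2 :=
  if h : ∃ i, v ∈ W i then σ h.choose v + ε h.choose else ρ v

private lemma comb_mem {V : Type*} [Fintype V] [DecidableEq V] {t : ℕ}
    {W : Fin t → Finset V} (hdisj : ∀ i j, i ≠ j → Disjoint (W i) (W j))
    (σ : Fin t → V → Fin 2) (ε : Fin t → Fin 2) (ρ : V → Fin 2) {v : V} {i : Fin t}
    (hv : v ∈ W i) : comb W σ ε ρ v = σ i v + ε i := by
  have h : ∃ j, v ∈ W j := ⟨i, hv⟩
  rw [comb, dif_pos h]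
  have hj : h.choose = i := by
    by_contra hne
    exact (Finset.disjoint_left.1 (hdisj _ _ hne)) h.choose_spec hv
  rw [hj]

private lemma comb_not_mem {V : Type*} [Fintype V] [DecidableEq V] {t : ℕ}
    {W : Fin t → Finset V} (σ : Fin t → V → Fin 2) (ε : Fin t → Fin 2) (ρ : V → Fin 2) {v : V}
    (hv : ¬∃ i, v ∈ W i) : comb W σ ε ρ v = ρ v := by
  rw [comb, dif_neg hv]

private lemma prod_ite_mem_one {V : Type*} [Fintype V] [DecidableEq V] (s : Finset V)
    (f : V → ℚ) : ∏ v, (if v ∈ s then f v else 1) = ∏ v ∈ s, f v := by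
  rw [Finset.prod_ite_mem, Finset.univ_inter]

private lemma partial_sum {V : Type*} [Fintype V] [DecidableEq V] (S : Finset V)
    (ω : V → Fin 2) (e : Finset V) (c : Fin 2) :
    (2:ℚ) ^ S.card *
      ∑ τ ∈ Finset.univ.filter (fun τ : V → Fin 2 => ∀ v ∈ S, τ v = ω v),
        ∏ v ∈ e, (if τ v = c then (1:ℚ) else 0)
    = 2 ^ ((Finset.univ \ e).card) * 2 ^ ((e ∩ S).card) *
        (if ∀ v ∈ e ∩ S, ω v = c then (1:ℚ) else 0) := by
  rw [Finset.sum_filter]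
  have h1 : ∀ τ : V → Fin 2,
      (if ∀ v ∈ S, τ v = ω v then (∏ v ∈ e, (if τ v = c then (1:ℚ) else 0)) else 0)
      = ∏ v, ((if v ∈ S then (if τ v = ω v then (1:ℚ) else 0) else 1) *
              (if v ∈ e then (if τ v = c then (1:ℚ) else 0) else 1)) := by
    intro τ
    rw [Finset.prod_mul_distrib, prod_ite_mem_one, prod_ite_mem_one]
    have hb : (∏ v ∈ S, if τ v = ω v then (1:ℚ) else 0)
        = if ∀ v ∈ S, τ v = ω v then (1:ℚ) else 0 := by
      rw [Finset.prod_boole]; split_ifs <;> rfl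
    by_cases h : ∀ v ∈ S, τ v = ω v
    · rw [if_pos h, hb, if_pos h, one_mul]
    · rw [if_neg h, hb, if_neg h, zero_mul]
  simp_rw [h1]
  rw [sum_pi_fin2 (fun v y => (if v ∈ S then (if y = ω v then (1:ℚ) else 0) else 1) *
              (if v ∈ e then (if y = c then (1:ℚ) else 0) else 1))]
  have h2 : (2:ℚ) ^ S.card = ∏ v, (if v ∈ S then (2:ℚ) else 1) := by
    rw [prod_ite_mem_one, Finset.prod_const]
  have h3 : (2:ℚ) ^ ((e ∩ S).card) * (if ∀ v ∈ e ∩ S, ω v = c then (1:ℚ) else 0)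
      = ∏ v, (if v ∈ e ∩ S then 2 * (if ω v = c then (1:ℚ) else 0) else 1) := by
    rw [prod_ite_mem_one, Finset.prod_mul_distrib, Finset.prod_const, Finset.prod_boole]
    congr 1
    split_ifs <;> rfl
  rw [h2, ← Finset.prod_mul_distrib, ← prod_ite_card e 2, mul_assoc, h3,
    ← Finset.prod_mul_distrib]
  apply Finset.prod_congr rfl
  intro v _
  by_cases hS : v ∈ S <;> by_cases he : v ∈ e <;>
    simp only [hS, he, Finset.mem_inter, and_true, and_false, if_true, if_false,
      true_and, false_and]
  · have h4 : ω v = 0 ∨ ω v = 1 := by omega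
    have h5 : c = 0 ∨ c = 1 := by omega
    rcases h4 with h4 | h4 <;> rcases h5 with h5 | h5 <;> simp [h4, h5] <;> ring
  · have h4 : ω v = 0 ∨ ω v = 1 := by omega
    rcases h4 with h4 | h4 <;> simp [h4]
  · have h5 : c = 0 ∨ c = 1 := by omega
    rcases h5 with h5 | h5 <;> simp [h5]
  · norm_num

private lemma comb_sum {V : Type*} [Fintype V] [DecidableEq V] {t : ℕ}
    {W : Fin t → Finset V} (hdisj : ∀ i j, i ≠ j → Disjoint (W i) (W j))
    (σ : Fin t → V → Fin 2) (e : Finset V) (c : Fin 2) :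
    ∑ ε : Fin t → Fin 2, ∑ ρ : V → Fin 2,
        ∏ v ∈ e, (if comb W σ ε ρ v = c then (1:ℚ) else 0)
    = 2 ^ ((Finset.univ \ e.filter (fun v => ¬∃ i, v ∈ W i)).card) *
        ∏ i, (∑ d : Fin 2, (if ∀ v ∈ e ∩ W i, σ i v = d then (1:ℚ) else 0)) := by
  have hpair : Set.PairwiseDisjoint (↑(Finset.univ : Finset (Fin t))) (fun i => e ∩ W i) := by
    intro i _ j _ hij
    exact Finset.disjoint_of_subset_left Finset.inter_subset_right
      (Finset.disjoint_of_subset_right Finset.inter_subset_right (hdisj i j hij))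
  have hsplit : ∀ (ε : Fin t → Fin 2) (ρ : V → Fin 2),
      (∏ v ∈ e, (if comb W σ ε ρ v = c then (1:ℚ) else 0))
      = (∏ i, ∏ v ∈ e ∩ W i, (if σ i v + ε i = c then (1:ℚ) else 0)) *
        ∏ v ∈ e.filter (fun v => ¬∃ i, v ∈ W i), (if ρ v = c then (1:ℚ) else 0) := by
    intro ε ρ
    rw [← Finset.prod_filter_mul_prod_filter_not e (fun v => ∃ i, v ∈ W i)]
    congr 1
    · have hbu : e.filter (fun v => ∃ i, v ∈ W i) = Finset.univ.biUnion (fun i => e ∩ W i) := by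
        ext v
        simp only [Finset.mem_filter, Finset.mem_biUnion, Finset.mem_inter, Finset.mem_univ,
          true_and]
        tauto
      rw [hbu, Finset.prod_biUnion hpair]
      apply Finset.prod_congr rfl
      intro i _
      apply Finset.prod_congr rfl
      intro v hv
      rw [comb_mem hdisj σ ε ρ (Finset.mem_inter.1 hv).2]
    · apply Finset.prod_congr rfl
      intro v hv
      rw [comb_not_mem σ ε ρ (Finset.mem_filter.1 hv).2]
  simp_rw [hsplit]
  have hB : ∑ ρ : V → Fin 2,
      ∏ v ∈ e.filter (fun v => ¬∃ i, v ∈ W i), (if ρ v = c then (1:ℚ) else 0)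
      = 2 ^ ((Finset.univ \ e.filter (fun v => ¬∃ i, v ∈ W i)).card) := by
    have : ∀ ρ : V → Fin 2,
        (∏ v ∈ e.filter (fun v => ¬∃ i, v ∈ W i), (if ρ v = c then (1:ℚ) else 0))
        = if ∀ v ∈ e.filter (fun v => ¬∃ i, v ∈ W i), ρ v = c then (1:ℚ) else 0 := by
      intro ρ
      rw [Finset.prod_boole]
      split_ifs <;> rfl
    simp_rw [this]
    exact count_agree _ (fun _ => c)
  calc ∑ ε : Fin t → Fin 2, ∑ ρ : V → Fin 2,
        ((∏ i, ∏ v ∈ e ∩ W i, (if σ i v + ε i = c then (1:ℚ) else 0)) *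
          ∏ v ∈ e.filter (fun v => ¬∃ i, v ∈ W i), (if ρ v = c then (1:ℚ) else 0))
      = (∑ ε : Fin t → Fin 2, ∏ i, ∏ v ∈ e ∩ W i, (if σ i v + ε i = c then (1:ℚ) else 0)) *
        (∑ ρ : V → Fin 2,
          ∏ v ∈ e.filter (fun v => ¬∃ i, v ∈ W i), (if ρ v = c then (1:ℚ) else 0)) := by
        rw [Finset.sum_mul]
        apply Finset.sum_congr rfl
        intro ε _
        rw [Finset.mul_sum]
    _ = 2 ^ ((Finset.univ \ e.filter (fun v => ¬∃ i, v ∈ W i)).card) *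
        ∏ i, (∑ d : Fin 2, (if ∀ v ∈ e ∩ W i, σ i v = d then (1:ℚ) else 0)) := by
        rw [hB, mul_comm]
        congr 1
        rw [sum_pi_fin2 (fun i y => ∏ v ∈ e ∩ W i, (if σ i v + y = c then (1:ℚ) else 0))]
        apply Finset.prod_congr rfl
        intro i _
        have hb : ∀ y : Fin 2, (∏ v ∈ e ∩ W i, (if σ i v + y = c then (1:ℚ) else 0))
            = if ∀ v ∈ e ∩ W i, σ i v + y = c then (1:ℚ) else 0 := by
          intro y
          rw [Finset.prod_boole]
          split_ifs <;> rfl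
        have e10 : ∀ x : Fin 2, (x + (1:Fin 2) = 0 ↔ x = 1) := by decide
        have e11 : ∀ x : Fin 2, (x + (1:Fin 2) = 1 ↔ x = 0) := by decide
        have e0 : ∀ x : Fin 2, x + (0:Fin 2) = x := by decide
        rw [hb 0, hb 1, Fin.sum_univ_two]
        simp only [e0]
        rcases (show c = 0 ∨ c = 1 by omega) with hc | hc <;> subst hc
        · simp only [e10]
        · simp only [e11]
          rw [add_comm]

private lemma star {t : ℕ} (cc : Fin t → ℚ) (j : Fin t) (h : ∀ i, i ≠ j → cc i = 2) :
    2 * ∏ i, cc i = 2 ^ t * ∑ i, cc i - ((t:ℚ) - 1) * 2 ^ (t + 1) := by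
  obtain ⟨n, rfl⟩ : ∃ n, t = n + 1 := ⟨t - 1, by have := j.pos; omega⟩
  have hc : (Finset.univ.erase j).card = n := by
    rw [Finset.card_erase_of_mem (Finset.mem_univ j), Finset.card_univ, Fintype.card_fin]
    omega
  have hp : ∏ i ∈ Finset.univ.erase j, cc i = 2 ^ n := by
    rw [Finset.prod_congr rfl fun i hi => h i (Finset.mem_erase.1 hi).1, Finset.prod_const, hc]
  have hs : ∑ i ∈ Finset.univ.erase j, cc i = 2 * n := by
    rw [Finset.sum_congr rfl fun i hi => h i (Finset.mem_erase.1 hi).1, Finset.sum_const, hc]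
    simp [mul_comm]
  rw [← Finset.prod_erase_mul _ _ (Finset.mem_univ j),
    ← Finset.sum_erase_add _ _ (Finset.mem_univ j), hp, hs]
  push_cast
  ring

private lemma spread_small {t : ℕ} (a : Fin t → ℕ)
    (hsp : ∑ i, a i ≤ (∑ i, min (a i) 1) + 1) (j : Fin t) (hj : 2 ≤ a j) :
    ∀ i, i ≠ j → a i ≤ 1 := by
  intro i hij
  by_contra hi
  push_neg at hi
  have key : ∀ f : Fin t → ℕ,
      ∑ k, f k = f i + (f j + ∑ k ∈ (Finset.univ.erase i).erase j, f k) := by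
    intro f
    rw [← Finset.add_sum_erase _ f (Finset.mem_univ i)]
    congr 1
    rw [← Finset.add_sum_erase _ f (Finset.mem_erase.2 ⟨Ne.symm hij, Finset.mem_univ j⟩)]
  have hle : ∑ k ∈ (Finset.univ.erase i).erase j, min (a k) 1
      ≤ ∑ k ∈ (Finset.univ.erase i).erase j, a k :=
    Finset.sum_le_sum fun k _ => min_le_left _ _
  rw [key a, key (fun k => min (a k) 1)] at hsp
  have m1 : min (a i) 1 ≤ 1 := min_le_right _ _
  have m2 : min (a j) 1 ≤ 1 := min_le_right _ _
  omega

private lemma csmall {V : Type*} [Fintype V] [DecidableEq V] (A : Finset V) (σ : V → Fin 2)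
    (h : A.card ≤ 1) :
    (2:ℚ) ^ A.card * ∑ d : Fin 2, (if ∀ v ∈ A, σ v = d then (1:ℚ) else 0) = 2 := by
  rcases Nat.le_one_iff_eq_zero_or_eq_one.1 h with h0 | h1
  · have hA : A = ∅ := Finset.card_eq_zero.1 h0
    subst hA
    simp [Fin.sum_univ_two]
  · obtain ⟨v0, hv0⟩ := Finset.card_eq_one.1 h1
    subst hv0
    simp only [Finset.card_singleton, Finset.mem_singleton, pow_one, Fin.sum_univ_two]
    have hs : ∀ d : Fin 2, (∀ v, v = v0 → σ v = d) ↔ σ v0 = d := by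
      intro d; constructor
      · exact fun hh => hh v0 rfl
      · rintro hh v rfl; exact hh
    simp only [hs]
    rcases (show σ v0 = 0 ∨ σ v0 = 1 by omega) with hv | hv <;> simp [hv] <;> norm_num

private lemma edge_key {V : Type*} [Fintype V] [DecidableEq V] {t : ℕ}
    {W : Fin t → Finset V} (hdisj : ∀ i j, i ≠ j → Disjoint (W i) (W j))
    (σ : Fin t → V → Fin 2) (e : Finset V)
    (hsp : (∑ i, (e ∩ W i).card) ≤ (∑ i, min ((e ∩ W i).card) 1) + 1) :
    ∑ ε : Fin t → Fin 2, ∑ ρ : V → Fin 2,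
        ∑ c : Fin 2, ∏ v ∈ e, (if comb W σ ε ρ v = c then (1:ℚ) else 0)
    = 2 ^ t * (∑ i, (2:ℚ) ^ ((W i).card) *
          ∑ τ ∈ Finset.univ.filter (fun τ : V → Fin 2 => ∀ v ∈ W i, τ v = σ i v),
            ∑ c : Fin 2, ∏ v ∈ e, (if τ v = c then (1:ℚ) else 0))
      - ((t:ℚ) - 1) * 2 ^ (t + 1) * 2 ^ ((Finset.univ \ e).card) := by
  set K : Fin t → ℚ :=
    fun i => ∑ d : Fin 2, (if ∀ v ∈ e ∩ W i, σ i v = d then (1:ℚ) else 0) with hK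
  -- LHS computation
  have s1 : ∀ ε : Fin t → Fin 2,
      (∑ ρ : V → Fin 2, ∑ c : Fin 2, ∏ v ∈ e, (if comb W σ ε ρ v = c then (1:ℚ) else 0))
      = ∑ c : Fin 2, ∑ ρ : V → Fin 2, ∏ v ∈ e, (if comb W σ ε ρ v = c then (1:ℚ) else 0) :=
    fun ε => Finset.sum_comm
  have hDcard : (Finset.univ \ e.filter (fun v => ¬∃ i, v ∈ W i)).card
      = (Finset.univ \ e).card + ∑ i, (e ∩ W i).card := by
    have hbu : e.filter (fun v => ∃ i, v ∈ W i) = Finset.univ.biUnion (fun i => e ∩ W i) := by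
      ext v
      simp only [Finset.mem_filter, Finset.mem_biUnion, Finset.mem_inter, Finset.mem_univ,
        true_and]
      tauto
    have h1 : (e.filter (fun v => ∃ i, v ∈ W i)).card = ∑ i, (e ∩ W i).card := by
      rw [hbu, Finset.card_biUnion]
      intro i _ j _ hij
      exact Finset.disjoint_of_subset_left Finset.inter_subset_right
        (Finset.disjoint_of_subset_right Finset.inter_subset_right (hdisj i j hij))
    have h2 := Finset.card_filter_add_card_filter_not (s := e)
      (p := fun v => ∃ i, v ∈ W i)
    have h3 : (Finset.univ \ e).card = Fintype.card V - e.card := by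
      rw [Finset.card_sdiff_of_subset (Finset.subset_univ e), Finset.card_univ]
    have h4 : (Finset.univ \ e.filter (fun v => ¬∃ i, v ∈ W i)).card
        = Fintype.card V - (e.filter (fun v => ¬∃ i, v ∈ W i)).card := by
      rw [Finset.card_sdiff_of_subset (Finset.subset_univ _), Finset.card_univ]
    have h5 : e.card ≤ Fintype.card V := by
      rw [← Finset.card_univ]; exact Finset.card_le_card (Finset.subset_univ e)
    have h6 : (e.filter (fun v => ¬∃ i, v ∈ W i)).card ≤ e.card :=
      Finset.card_le_card (Finset.filter_subset _ _)
    omega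
  have hL : (∑ ε : Fin t → Fin 2, ∑ ρ : V → Fin 2,
        ∑ c : Fin 2, ∏ v ∈ e, (if comb W σ ε ρ v = c then (1:ℚ) else 0))
      = 2 ^ ((Finset.univ \ e).card) * (2 * ∏ i, ((2:ℚ) ^ ((e ∩ W i).card) * K i)) := by
    simp_rw [s1]
    rw [Finset.sum_comm]
    have : ∀ c : Fin 2, (∑ ε : Fin t → Fin 2, ∑ ρ : V → Fin 2,
        ∏ v ∈ e, (if comb W σ ε ρ v = c then (1:ℚ) else 0))
        = 2 ^ ((Finset.univ \ e.filter (fun v => ¬∃ i, v ∈ W i)).card) * ∏ i, K i :=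
      fun c => comb_sum hdisj σ e c
    simp_rw [this]
    rw [Finset.sum_const, Finset.card_univ, Fintype.card_fin, hDcard, pow_add,
      Finset.prod_mul_distrib, Finset.prod_pow_eq_pow_sum]
    push_cast
    ring
  rw [hL]
  -- RHS computation
  have hR : ∀ i, (2:ℚ) ^ ((W i).card) *
        ∑ τ ∈ Finset.univ.filter (fun τ : V → Fin 2 => ∀ v ∈ W i, τ v = σ i v),
          ∑ c : Fin 2, ∏ v ∈ e, (if τ v = c then (1:ℚ) else 0)
      = 2 ^ ((Finset.univ \ e).card) * ((2:ℚ) ^ ((e ∩ W i).card) * K i) := by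
    intro i
    have s2 : (∑ τ ∈ Finset.univ.filter (fun τ : V → Fin 2 => ∀ v ∈ W i, τ v = σ i v),
          ∑ c : Fin 2, ∏ v ∈ e, (if τ v = c then (1:ℚ) else 0))
        = ∑ c : Fin 2, ∑ τ ∈ Finset.univ.filter (fun τ : V → Fin 2 => ∀ v ∈ W i, τ v = σ i v),
            ∏ v ∈ e, (if τ v = c then (1:ℚ) else 0) := Finset.sum_comm
    rw [s2, Finset.mul_sum]
    rw [Finset.sum_congr rfl (fun c _ => partial_sum (W i) (σ i) e c)]
    rw [hK]
    simp_rw [mul_assoc]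
    rw [← Finset.mul_sum, ← Finset.mul_sum]
  rw [Finset.sum_congr rfl (fun i _ => hR i), ← Finset.mul_sum]
  -- reduce to the scalar identity
  have hmain : 2 * ∏ i, ((2:ℚ) ^ ((e ∩ W i).card) * K i)
      = 2 ^ t * ∑ i, ((2:ℚ) ^ ((e ∩ W i).card) * K i) - ((t:ℚ) - 1) * 2 ^ (t + 1) := by
    rcases Nat.eq_zero_or_pos t with ht | ht
    · subst ht
      simp
    · by_cases h2 : ∃ j, 2 ≤ (e ∩ W j).card
      · obtain ⟨j, hj⟩ := h2
        exact star _ j (fun i hij =>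
          csmall _ _ (spread_small (fun i => (e ∩ W i).card) hsp j hj i hij))
      · push_neg at h2
        exact star _ ⟨0, ht⟩ (fun i _ => csmall _ _ (by have := h2 i; omega))
  linear_combination (2:ℚ) ^ ((Finset.univ \ e).card) * hmain

private lemma cut_ind {V : Type*} [DecidableEq V] (e : Finset V) (he : e.Nonempty)
    (τ : V → Fin 2) :
    (if ∃ a ∈ e, ∃ b ∈ e, τ a ≠ τ b then (1:ℚ) else 0)
      = 1 - ∑ c : Fin 2, ∏ v ∈ e, (if τ v = c then (1:ℚ) else 0) := by
  have hb : ∀ c : Fin 2, (∏ v ∈ e, (if τ v = c then (1:ℚ) else 0))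
      = if ∀ v ∈ e, τ v = c then (1:ℚ) else 0 := by
    intro c; rw [Finset.prod_boole]
  rw [Fin.sum_univ_two, hb 0, hb 1]
  by_cases h : ∃ a ∈ e, ∃ b ∈ e, τ a ≠ τ b
  · obtain ⟨p, hp, q, hq, hpq⟩ := h
    have h0 : ¬∀ v ∈ e, τ v = 0 := fun hh => hpq ((hh p hp).trans (hh q hq).symm)
    have h1 : ¬∀ v ∈ e, τ v = 1 := fun hh => hpq ((hh p hp).trans (hh q hq).symm)
    rw [if_pos ⟨p, hp, q, hq, hpq⟩, if_neg h0, if_neg h1]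
    norm_num
  · rw [if_neg h]
    have h' := h
    push_neg at h'
    obtain ⟨v0, hv0⟩ := he
    have hall : ∀ v ∈ e, τ v = τ v0 := fun v hv => h' v hv v0 hv0
    rcases (show τ v0 = 0 ∨ τ v0 = 1 by omega) with hc | hc
    · rw [if_pos (fun v hv => (hall v hv).trans hc),
        if_neg (fun hh => by have := hh v0 hv0; rw [hc] at this; exact absurd this (by decide))]
      norm_num
    · rw [if_neg (fun hh => by have := hh v0 hv0; rw [hc] at this; exact absurd this (by decide)),
        if_pos (fun v hv => (hall v hv).trans hc)]
      norm_num

private lemma countP_cast {V : Type*} [DecidableEq V] (H : Multiset (Finset V))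
    (p : Finset V → Prop) [DecidablePred p] :
    ((H.countP p : ℕ) : ℚ) = (H.map (fun e => if p e then (1:ℚ) else 0)).sum := by
  induction H using Multiset.induction_on with
  | empty => simp
  | cons a s ih =>
    rw [Multiset.countP_cons, Multiset.map_cons, Multiset.sum_cons, ← ih]
    push_cast
    split_ifs <;> ring

private lemma swap_sum {α V : Type*} [DecidableEq V] (s : Finset α) (H : Multiset (Finset V))
    (g : α → Finset V → ℚ) :
    ∑ a ∈ s, (H.map (g a)).sum = (H.map (fun e => ∑ a ∈ s, g a e)).sum := by
  induction H using Multiset.induction_on with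
  | empty => simp
  | cons b T ih => simp [Multiset.map_cons, Multiset.sum_cons, ← ih, Finset.sum_add_distrib]

private lemma map_sub_sum {V : Type*} (H : Multiset (Finset V)) (f g : Finset V → ℚ) :
    (H.map (fun e => f e - g e)).sum = (H.map f).sum - (H.map g).sum := by
  induction H using Multiset.induction_on with
  | empty => simp
  | cons a s ih => simp [ih]; ring

private lemma edge_cut {V : Type*} [Fintype V] [DecidableEq V] {t : ℕ}
    {W : Fin t → Finset V} (hdisj : ∀ i j, i ≠ j → Disjoint (W i) (W j))
    (σ : Fin t → V → Fin 2) (e : Finset V) (he : e.Nonempty)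
    (hsp : (∑ i, (e ∩ W i).card) ≤ (∑ i, min ((e ∩ W i).card) 1) + 1) :
    ∑ ε : Fin t → Fin 2, ∑ ρ : V → Fin 2,
        (if ∃ a ∈ e, ∃ b ∈ e, comb W σ ε ρ a ≠ comb W σ ε ρ b then (1:ℚ) else 0)
    = 2 ^ t * (∑ i, (2:ℚ) ^ ((W i).card) *
          ∑ τ ∈ Finset.univ.filter (fun τ : V → Fin 2 => ∀ v ∈ W i, τ v = σ i v),
            (if ∃ a ∈ e, ∃ b ∈ e, τ a ≠ τ b then (1:ℚ) else 0))
      - ((t:ℚ) - 1) * 2 ^ t * 2 ^ (Fintype.card V) * (1 - 2 / (2:ℚ) ^ e.card) := by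
  have F5 : (2:ℚ) ^ ((Finset.univ \ e).card) * 2 ^ e.card = 2 ^ (Fintype.card V) := by
    rw [← pow_add]
    congr 1
    rw [Finset.card_sdiff_of_subset (Finset.subset_univ e), Finset.card_univ]
    have : e.card ≤ Fintype.card V := by
      rw [← Finset.card_univ]; exact Finset.card_le_card (Finset.subset_univ e)
    omega
  have F4 : ∀ i : Fin t,
      (2:ℚ) ^ ((W i).card) * 2 ^ ((Finset.univ \ W i).card) = 2 ^ (Fintype.card V) := by
    intro i
    rw [← pow_add]
    congr 1
    rw [Finset.card_sdiff_of_subset (Finset.subset_univ _), Finset.card_univ]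
    have : (W i).card ≤ Fintype.card V := by
      rw [← Finset.card_univ]; exact Finset.card_le_card (Finset.subset_univ _)
    omega
  have F2 : (∑ ε : Fin t → Fin 2, ∑ ρ : V → Fin 2,
        (if ∃ a ∈ e, ∃ b ∈ e, comb W σ ε ρ a ≠ comb W σ ε ρ b then (1:ℚ) else 0))
      = 2 ^ t * 2 ^ (Fintype.card V) - ∑ ε : Fin t → Fin 2, ∑ ρ : V → Fin 2,
          ∑ c : Fin 2, ∏ v ∈ e, (if comb W σ ε ρ v = c then (1:ℚ) else 0) := by
    simp_rw [cut_ind e he]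
    simp only [Finset.sum_sub_distrib, Finset.sum_const, Finset.card_univ, Fintype.card_fun,
      Fintype.card_fin, nsmul_eq_mul, mul_one]
    push_cast
    ring
  have F3 : ∀ i : Fin t,
      (∑ τ ∈ Finset.univ.filter (fun τ : V → Fin 2 => ∀ v ∈ W i, τ v = σ i v),
        ∑ c : Fin 2, ∏ v ∈ e, (if τ v = c then (1:ℚ) else 0))
      = 2 ^ ((Finset.univ \ W i).card) -
        ∑ τ ∈ Finset.univ.filter (fun τ : V → Fin 2 => ∀ v ∈ W i, τ v = σ i v),
          (if ∃ a ∈ e, ∃ b ∈ e, τ a ≠ τ b then (1:ℚ) else 0) := by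
    intro i
    have hcard : (∑ τ ∈ Finset.univ.filter (fun τ : V → Fin 2 => ∀ v ∈ W i, τ v = σ i v),
        (1:ℚ)) = 2 ^ ((Finset.univ \ W i).card) := by
      rw [Finset.sum_filter]
      exact count_agree (W i) (σ i)
    simp_rw [cut_ind e he]
    rw [Finset.sum_sub_distrib, hcard]
    ring
  rw [F2, edge_key hdisj σ e hsp]
  have hYsum : (∑ i, (2:ℚ) ^ ((W i).card) *
        ∑ τ ∈ Finset.univ.filter (fun τ : V → Fin 2 => ∀ v ∈ W i, τ v = σ i v),
          ∑ c : Fin 2, ∏ v ∈ e, (if τ v = c then (1:ℚ) else 0))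
      = (t : ℚ) * 2 ^ (Fintype.card V) - ∑ i, (2:ℚ) ^ ((W i).card) *
          ∑ τ ∈ Finset.univ.filter (fun τ : V → Fin 2 => ∀ v ∈ W i, τ v = σ i v),
            (if ∃ a ∈ e, ∃ b ∈ e, τ a ≠ τ b then (1:ℚ) else 0) := by
    rw [Finset.sum_congr rfl (fun i _ => by rw [F3 i])]
    simp only [mul_sub]
    rw [Finset.sum_sub_distrib]
    congr 1
    rw [Finset.sum_congr rfl (fun i _ => F4 i), Finset.sum_const, Finset.card_univ,
      Fintype.card_fin, nsmul_eq_mul]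
  rw [hYsum]
  have hec : (2:ℚ) ^ e.card ≠ 0 := by positivity
  field_simp
  linear_combination (((t:ℚ) - 1) * 2 ^ (t + 1)) * F5

/-- If every edge f of a mixed multihypergraph H has vertices in at least |f| − 1
distinct parts of the partition obtained from the disjoint sets V₁,…,V_t by adding
singletons, and each Vᵢ carries a partial 2-cut of average excess xᵢ, then H has a
2-cut with excess at least Σᵢ xᵢ. -/
theorem stmt_10 {V : Type*} [Fintype V] [DecidableEq V]
    (H : Multiset (Finset V)) (hne : ∀ e ∈ H, e.Nonempty)
    (t : ℕ) (W : Fin t → Finset V)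
    (hdisj : ∀ i j, i ≠ j → Disjoint (W i) (W j))
    (hspread : ∀ f ∈ H,
      (∑ i, (f ∩ W i).card) ≤ (∑ i, min ((f ∩ W i).card) 1) + 1)
    (x : Fin t → ℚ)
    (hcuts : ∀ i, ∃ ω : V → Fin 2,
      (∑ τ ∈ Finset.univ.filter (fun τ : V → Fin 2 => ∀ v ∈ W i, τ v = ω v),
          (H.countP (fun e => ∃ a ∈ e, ∃ b ∈ e, τ a ≠ τ b) : ℚ))
          / 2 ^ ((Finset.univ \ W i).card)
        - (H.map (fun e => 1 - 2 / (2 : ℚ) ^ e.card)).sum ≥ x i) :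
    ∃ ω : V → Fin 2,
      (H.countP (fun e => ∃ a ∈ e, ∃ b ∈ e, ω a ≠ ω b) : ℚ)
        ≥ (H.map (fun e => 1 - 2 / (2 : ℚ) ^ e.card)).sum + ∑ i, x i := by
  classical
  choose σ hσ using hcuts
  set B : ℚ := (H.map (fun e => 1 - 2 / (2 : ℚ) ^ e.card)).sum with hB
  have hcnt : ∀ τ : V → Fin 2,
      ((H.countP (fun e => ∃ a ∈ e, ∃ b ∈ e, τ a ≠ τ b) : ℕ) : ℚ)
      = (H.map (fun e => if ∃ a ∈ e, ∃ b ∈ e, τ a ≠ τ b then (1:ℚ) else 0)).sum :=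
    fun τ => countP_cast H _
  set n : ℕ := Fintype.card V with hn
  -- global identity
  have hglob : (∑ ε : Fin t → Fin 2, ∑ ρ : V → Fin 2,
      (H.map (fun e =>
        if ∃ a ∈ e, ∃ b ∈ e, comb W σ ε ρ a ≠ comb W σ ε ρ b then (1:ℚ) else 0)).sum)
    = 2 ^ t * ∑ i, (2:ℚ) ^ ((W i).card) *
        ∑ τ ∈ Finset.univ.filter (fun τ : V → Fin 2 => ∀ v ∈ W i, τ v = σ i v),
          (H.map (fun e => if ∃ a ∈ e, ∃ b ∈ e, τ a ≠ τ b then (1:ℚ) else 0)).sum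
      - ((t:ℚ) - 1) * 2 ^ t * 2 ^ n * B := by
    calc (∑ ε : Fin t → Fin 2, ∑ ρ : V → Fin 2,
        (H.map (fun e =>
          if ∃ a ∈ e, ∃ b ∈ e, comb W σ ε ρ a ≠ comb W σ ε ρ b then (1:ℚ) else 0)).sum)
        = (H.map (fun e => ∑ ε : Fin t → Fin 2, ∑ ρ : V → Fin 2,
            (if ∃ a ∈ e, ∃ b ∈ e, comb W σ ε ρ a ≠ comb W σ ε ρ b then (1:ℚ) else 0))).sum := by
          rw [Finset.sum_congr rfl (fun ε _ => swap_sum Finset.univ H _)]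
          exact swap_sum Finset.univ H _
      _ = (H.map (fun e =>
            2 ^ t * (∑ i, (2:ℚ) ^ ((W i).card) *
              ∑ τ ∈ Finset.univ.filter (fun τ : V → Fin 2 => ∀ v ∈ W i, τ v = σ i v),
                (if ∃ a ∈ e, ∃ b ∈ e, τ a ≠ τ b then (1:ℚ) else 0))
            - ((t:ℚ) - 1) * 2 ^ t * 2 ^ n * (1 - 2 / (2:ℚ) ^ e.card))).sum := by
          congr 1
          apply Multiset.map_congr rfl
          intro e heH
          exact edge_cut hdisj σ e (hne e heH) (hspread e heH)
      _ = 2 ^ t * ∑ i, (2:ℚ) ^ ((W i).card) *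
            ∑ τ ∈ Finset.univ.filter (fun τ : V → Fin 2 => ∀ v ∈ W i, τ v = σ i v),
              (H.map (fun e => if ∃ a ∈ e, ∃ b ∈ e, τ a ≠ τ b then (1:ℚ) else 0)).sum
          - ((t:ℚ) - 1) * 2 ^ t * 2 ^ n * B := by
          rw [map_sub_sum, Multiset.sum_map_mul_left, Multiset.sum_map_mul_left]
          congr 1
          · congr 1
            rw [← swap_sum]
            apply Finset.sum_congr rfl
            intro i _
            rw [Multiset.sum_map_mul_left]
            congr 1
            rw [← swap_sum]
      _ = _ := rfl
  -- inequality from the hypotheses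
  have hAi : ∀ i, (2:ℚ) ^ n * (x i + B) ≤ (2:ℚ) ^ ((W i).card) *
      ∑ τ ∈ Finset.univ.filter (fun τ : V → Fin 2 => ∀ v ∈ W i, τ v = σ i v),
        (H.map (fun e => if ∃ a ∈ e, ∃ b ∈ e, τ a ≠ τ b then (1:ℚ) else 0)).sum := by
    intro i
    have h1 := hσ i
    simp only [hcnt] at h1
    have hd : (0:ℚ) < 2 ^ ((Finset.univ \ W i).card) := by positivity
    have h2 : (x i + B) * 2 ^ ((Finset.univ \ W i).card)
        ≤ ∑ τ ∈ Finset.univ.filter (fun τ : V → Fin 2 => ∀ v ∈ W i, τ v = σ i v),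
            (H.map (fun e => if ∃ a ∈ e, ∃ b ∈ e, τ a ≠ τ b then (1:ℚ) else 0)).sum := by
      rw [← le_div_iff₀ hd]
      linarith
    have hF : (2:ℚ) ^ ((W i).card) * 2 ^ ((Finset.univ \ W i).card) = 2 ^ n := by
      rw [← pow_add]
      congr 1
      rw [Finset.card_sdiff_of_subset (Finset.subset_univ _), Finset.card_univ]
      have : (W i).card ≤ Fintype.card V := by
        rw [← Finset.card_univ]; exact Finset.card_le_card (Finset.subset_univ _)
      omega
    calc (2:ℚ) ^ n * (x i + B)
        = (2:ℚ) ^ ((W i).card) * ((x i + B) * 2 ^ ((Finset.univ \ W i).card)) := by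
          rw [← hF]; ring
      _ ≤ _ := by
          apply mul_le_mul_of_nonneg_left h2 (by positivity)
  have hsum : (2:ℚ) ^ n * ((∑ i, x i) + t * B)
      ≤ ∑ i, (2:ℚ) ^ ((W i).card) *
          ∑ τ ∈ Finset.univ.filter (fun τ : V → Fin 2 => ∀ v ∈ W i, τ v = σ i v),
            (H.map (fun e => if ∃ a ∈ e, ∃ b ∈ e, τ a ≠ τ b then (1:ℚ) else 0)).sum := by
    have := Finset.sum_le_sum (fun i (_ : i ∈ Finset.univ) => hAi i)
    calc (2:ℚ) ^ n * ((∑ i, x i) + t * B) = ∑ i, (2:ℚ) ^ n * (x i + B) := by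
          rw [← Finset.mul_sum, Finset.sum_add_distrib, Finset.sum_const, Finset.card_univ,
            Fintype.card_fin, nsmul_eq_mul]
      _ ≤ _ := this
  have hT : 2 ^ t * 2 ^ n * (B + ∑ i, x i)
      ≤ ∑ ε : Fin t → Fin 2, ∑ ρ : V → Fin 2,
          (H.map (fun e =>
            if ∃ a ∈ e, ∃ b ∈ e, comb W σ ε ρ a ≠ comb W σ ε ρ b then (1:ℚ) else 0)).sum := by
    rw [hglob]
    have h3 : 2 ^ t * ((2:ℚ) ^ n * ((∑ i, x i) + t * B)) ≤ 2 ^ t *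
        ∑ i, (2:ℚ) ^ ((W i).card) *
          ∑ τ ∈ Finset.univ.filter (fun τ : V → Fin 2 => ∀ v ∈ W i, τ v = σ i v),
            (H.map (fun e => if ∃ a ∈ e, ∃ b ∈ e, τ a ≠ τ b then (1:ℚ) else 0)).sum :=
      mul_le_mul_of_nonneg_left hsum (by positivity)
    have h4 : 2 ^ t * ((2:ℚ) ^ n * ((∑ i, x i) + t * B)) - ((t:ℚ) - 1) * 2 ^ t * 2 ^ n * B
        = 2 ^ t * 2 ^ n * (B + ∑ i, x i) := by ring
    linarith
  -- averaging
  have hcard1 : (Finset.univ : Finset (Fin t → Fin 2)).card = 2 ^ t := by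
    rw [Finset.card_univ]; simp [Fintype.card_fun]
  have hcard2 : (Finset.univ : Finset (V → Fin 2)).card = 2 ^ n := by
    rw [Finset.card_univ]; simp [Fintype.card_fun, hn]
  have hconst : (∑ _ε : Fin t → Fin 2, ∑ _ρ : V → Fin 2, (B + ∑ i, x i))
      = 2 ^ t * 2 ^ n * (B + ∑ i, x i) := by
    rw [Finset.sum_const, Finset.sum_const, hcard1, hcard2, nsmul_eq_mul, nsmul_eq_mul]
    push_cast
    ring
  obtain ⟨ε, -, hε⟩ := Finset.exists_le_of_sum_le (Finset.univ_nonempty)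
    (by rw [hconst]; exact hT :
      (∑ _ε : Fin t → Fin 2, ∑ _ρ : V → Fin 2, (B + ∑ i, x i))
      ≤ ∑ ε : Fin t → Fin 2, ∑ ρ : V → Fin 2,
          (H.map (fun e =>
            if ∃ a ∈ e, ∃ b ∈ e, comb W σ ε ρ a ≠ comb W σ ε ρ b then (1:ℚ) else 0)).sum)
  obtain ⟨ρ, -, hρ⟩ := Finset.exists_le_of_sum_le (Finset.univ_nonempty) hε
  refine ⟨comb W σ ε ρ, ?_⟩
  rw [ge_iff_le, hcnt]
  exact hρ
end

section
/- Consider a uniformly random r-cut (each vertex independently uniform in {1,...,r}) of a multihypergraph, an edge e of size k, and a subset f ⊆ e with |f| ≥ 2. Let E_{f,2} be the event that f receives at least 2 distinct colours and E_e the event that e receives all r colours. Then P(E_e | E_{f,2}) > P(E_e | not E_{f,2}), and consequently P(E_e | E_{f,2}) ≥ S(k,r)·r!/r^k + c for a positive constant c depending only on k and r. -/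
open scoped Classical

def stirling2 : ℕ → ℕ → ℕ
  | 0, 0 => 1
  | 0, _ + 1 => 0
  | _ + 1, 0 => 0
  | n + 1, r + 1 => stirling2 n r + (r + 1) * stirling2 n (r + 1)

open Finset

section Helpers

lemma card_filter_equiv {α β : Type*} [Fintype α] [Fintype β] (E : α ≃ β) (p : β → Prop)
    [DecidablePred p] [DecidablePred fun a => p (E a)] :
    (univ.filter fun a => p (E a)).card = (univ.filter p).card := by
  apply Finset.card_bij' (fun a _ => E a) (fun b _ => E.symm b) <;> simp

lemma card_filter_fst {γ δ : Type*} [Fintype γ] [Fintype δ] (R : γ → Prop)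
    [DecidablePred R] [DecidablePred fun p : γ × δ => R p.1] :
    (univ.filter fun p : γ × δ => R p.1).card = (univ.filter R).card * Fintype.card δ := by
  rw [Finset.card_filter, Finset.card_filter, Fintype.sum_prod_type, Finset.sum_mul]
  refine Finset.sum_congr rfl fun g _ => ?_
  by_cases h : R g <;> simp [h, Finset.card_univ]

lemma card_surj (n r : ℕ) :
    ((univ : Finset (Fin n → Fin r)).filter fun g => Function.Surjective g).card
      = stirling2 n r * r.factorial := by
  induction n generalizing r with
  | zero =>
    match r with
    | 0 =>
      rw [Finset.filter_true_of_mem]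
      · simp [stirling2]
      · intro g _ i; exact absurd i.2 (by omega)
    | r + 1 =>
      rw [Finset.filter_false_of_mem]
      · simp [stirling2]
      · intro g _ hs
        obtain ⟨j, -⟩ := hs 0
        exact absurd j.2 (by omega)
  | succ n ih =>
    match r with
    | 0 =>
      have : IsEmpty (Fin (n + 1) → Fin 0) := by infer_instance
      simp [stirling2, Finset.univ_eq_empty]
    | r + 1 =>
      have h1 : ((univ : Finset (Fin (n+1) → Fin (r+1))).filter fun g => Function.Surjective g).card
          = ((univ : Finset (Fin (r+1) × (Fin n → Fin (r+1)))).filter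
              fun p => Function.Surjective (Fin.cons p.1 p.2)).card :=
        (card_filter_equiv (Fin.consEquiv fun _ => Fin (r+1)) (fun g => Function.Surjective g)).symm
      have hiff : ∀ (c : Fin (r+1)) (g' : Fin n → Fin (r+1)),
          Function.Surjective (Fin.cons c g' : Fin (n+1) → Fin (r+1))
            ↔ ∀ i, i ≠ c → ∃ j, g' j = i := by
        intro c g'
        constructor
        · intro hs i hic
          obtain ⟨x, hx⟩ := hs i
          induction x using Fin.cases with
          | zero => rw [Fin.cons_zero] at hx; exact absurd hx.symm hic
          | succ j => rw [Fin.cons_succ] at hx; exact ⟨j, hx⟩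
        · intro hh i
          by_cases hic : i = c
          · exact ⟨0, by rw [Fin.cons_zero, hic]⟩
          · obtain ⟨j, hj⟩ := hh i hic
            exact ⟨j.succ, by rw [Fin.cons_succ]; exact hj⟩
      have hM : ∀ c : Fin (r+1),
          ((univ : Finset (Fin n → Fin (r+1))).filter fun g' => ∀ i, i ≠ c → ∃ j, g' j = i).card
          = stirling2 n (r+1) * (r+1).factorial + stirling2 n r * r.factorial := by
        intro c
        have hsplit := Finset.card_filter_add_card_filter_not
          (s := (univ : Finset (Fin n → Fin (r+1))).filter fun g' => ∀ i, i ≠ c → ∃ j, g' j = i)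
          (p := fun g' => Function.Surjective g')
        rw [Finset.filter_filter, Finset.filter_filter] at hsplit
        have e1 : ((univ : Finset (Fin n → Fin (r+1))).filter
            fun g' => (∀ i, i ≠ c → ∃ j, g' j = i) ∧ Function.Surjective g').card
            = stirling2 n (r+1) * (r+1).factorial := by
          rw [Finset.filter_congr (q := fun g' => Function.Surjective g')
            (fun g' _ => ⟨fun h => h.2, fun h => ⟨fun i _ => h i, h⟩⟩), ih]
        have e2 : ((univ : Finset (Fin n → Fin (r+1))).filter
            fun g' => (∀ i, i ≠ c → ∃ j, g' j = i) ∧ ¬ Function.Surjective g').card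
            = stirling2 n r * r.factorial := by
          rw [Finset.filter_congr
              (q := fun g' : Fin n → Fin (r+1) => (∀ i, i ≠ c → ∃ j, g' j = i) ∧ ∀ j, g' j ≠ c) ?_,
            ← ih r]
          · refine (Finset.card_bij (fun g'' _ => fun j => c.succAbove (g'' j)) ?_ ?_ ?_).symm
            · intro g'' hg''
              simp only [Finset.mem_filter, Finset.mem_univ, true_and] at hg'' ⊢
              refine ⟨fun i hic => ?_, fun j => Fin.succAbove_ne c _⟩
              obtain ⟨t, ht⟩ := Fin.exists_succAbove_eq hic
              obtain ⟨j, hj⟩ := hg'' t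
              exact ⟨j, by rw [hj, ht]⟩
            · intro g1 _ g2 _ heq
              funext j
              exact Fin.succAbove_right_injective (congrFun heq j)
            · intro g' hg'
              simp only [Finset.mem_filter, Finset.mem_univ, true_and] at hg'
              obtain ⟨hhit, havoid⟩ := hg'
              choose t ht using fun j => Fin.exists_succAbove_eq (havoid j)
              refine ⟨t, ?_, ?_⟩
              · simp only [Finset.mem_filter, Finset.mem_univ, true_and]
                intro s
                obtain ⟨j, hj⟩ := hhit (c.succAbove s) (Fin.succAbove_ne c s)
                exact ⟨j, Fin.succAbove_right_injective (by rw [ht j, hj])⟩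
              · funext j; exact ht j
          · intro g' _
            constructor
            · rintro ⟨ha, hb⟩
              refine ⟨ha, fun j hj => hb ?_⟩
              intro i
              by_cases hic : i = c
              · exact ⟨j, hic ▸ hj⟩
              · exact ha i hic
            · rintro ⟨ha, hb⟩
              refine ⟨ha, fun hs => ?_⟩
              obtain ⟨j, hj⟩ := hs c
              exact hb j hj
        rw [e1, e2] at hsplit
        exact hsplit.symm
      rw [h1, Finset.card_filter, Fintype.sum_prod_type]
      have hinner : ∀ c : Fin (r+1),
          (∑ g' : Fin n → Fin (r+1),
            if Function.Surjective (Fin.cons c g' : Fin (n+1) → Fin (r+1)) then 1 else 0)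
          = stirling2 n (r+1) * (r+1).factorial + stirling2 n r * r.factorial := by
        intro c
        rw [← hM c, Finset.card_filter]
        exact Finset.sum_congr rfl fun g' _ => by rw [if_congr (hiff c g') rfl rfl]
      rw [Finset.sum_congr rfl fun c _ => hinner c, Finset.sum_const, Finset.card_univ,
        Fintype.card_fin, smul_eq_mul]
      show (r+1) * _ = stirling2 (n+1) (r+1) * (r+1).factorial
      rw [show stirling2 (n+1) (r+1) = stirling2 n r + (r + 1) * stirling2 n (r + 1) from rfl,
        Nat.factorial_succ]
      ring

lemma card_surj' (X : Type) [Fintype X] [DecidableEq X] (r : ℕ) :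
    ((univ : Finset (X → Fin r)).filter fun g => Function.Surjective g).card
      = stirling2 (Fintype.card X) r * r.factorial := by
  rw [← card_surj (Fintype.card X) r]
  have h := card_filter_equiv
    (Equiv.arrowCongr (Fintype.equivFin X).symm (Equiv.refl (Fin r)))
    (fun g : X → Fin r => Function.Surjective g)
  rw [← h]
  refine congrArg Finset.card (Finset.filter_congr fun G _ => ?_)
  constructor
  · intro hs i
    obtain ⟨x, hx⟩ := hs i
    refine ⟨Fintype.equivFin X x, ?_⟩
    simpa [Equiv.arrowCongr] using hx
  · intro hs i
    obtain ⟨y, hy⟩ := hs i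
    exact ⟨(Fintype.equivFin X).symm y, by simpa [Equiv.arrowCongr] using hy⟩

end Helpers

section NcntSection

noncomputable def Ncnt (r : ℕ) (W : Type) [Fintype W] [DecidableEq W] (s : Finset (Fin r)) : ℕ :=
  ((univ : Finset (W → Fin r)).filter fun h => ∀ i ∉ s, ∃ w, h w = i).card

@[reducible] def Sg {F : Type} [Fintype F] {r : ℕ} (g : F → Fin r) : Finset (Fin r) :=
  univ.image g

lemma Ncnt_mono (r : ℕ) (W : Type) [Fintype W] [DecidableEq W] {s t : Finset (Fin r)}
    (hst : s ⊆ t) : Ncnt r W s ≤ Ncnt r W t := by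
  apply Finset.card_le_card
  apply Finset.monotone_filter_right
  intro h _ hh i hit
  exact hh i fun hc => hit (hst hc)

lemma Ncnt_swap (r : ℕ) (W : Type) [Fintype W] [DecidableEq W] (c c' : Fin r) :
    Ncnt r W {c} = Ncnt r W {c'} := by
  have key : ∀ (x y : Fin r) (h : W → Fin r),
      (∀ i ∉ ({x} : Finset (Fin r)), ∃ w, h w = i) →
      (∀ i ∉ ({y} : Finset (Fin r)), ∃ w, (Equiv.swap x y) (h w) = i) := by
    intro x y h hh i hi
    have hiy : i ≠ y := by simpa using hi
    have hxj : Equiv.swap x y i ≠ x := by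
      intro hc
      apply hiy
      have := congrArg (Equiv.swap x y) hc
      rwa [Equiv.swap_apply_self, Equiv.swap_apply_left] at this
    obtain ⟨w, hw⟩ := hh (Equiv.swap x y i) (by simpa using hxj)
    exact ⟨w, by rw [hw, Equiv.swap_apply_self]⟩
  apply Finset.card_bij' (fun h _ => (Equiv.swap c c') ∘ h) (fun h _ => (Equiv.swap c c') ∘ h)
  · intro h hh
    simp only [Finset.mem_filter, Finset.mem_univ, true_and] at hh ⊢
    exact key c c' h hh
  · intro h hh
    simp only [Finset.mem_filter, Finset.mem_univ, true_and] at hh ⊢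
    intro i hi
    rw [Equiv.swap_comm]
    exact key c' c h hh i hi
  · intro h _; funext w; simp [Equiv.swap_apply_self]
  · intro h _; funext w; simp [Equiv.swap_apply_self]

lemma exists_good (r : ℕ) (hr : 2 ≤ r) (F W : Type) [Fintype F] [Fintype W]
    (hF : 2 ≤ Fintype.card F) (hk : r ≤ Fintype.card F + Fintype.card W) :
    ∃ (g₀ : F → Fin r) (c : Fin r) (h₀ : W → Fin r),
      (∃ u v, g₀ u ≠ g₀ v) ∧ c ∈ Sg g₀ ∧
      (∀ i, i ∉ Sg g₀ → ∃ x, h₀ x = i) ∧ (∃ i, i ≠ c ∧ ∀ x, h₀ x ≠ i) := by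
  set m := Fintype.card F with hm
  set w := Fintype.card W with hw
  let κ := Fintype.equivFin F
  let μ := Fintype.equivFin W
  refine ⟨fun u => ⟨min (κ u).1 (r-1), by omega⟩, ⟨min (m-1) (r-1), by omega⟩,
    fun x => ⟨min (m + (μ x).1) (r-1), by omega⟩, ?_, ?_, ?_, ?_⟩
  · refine ⟨κ.symm ⟨0, by omega⟩, κ.symm ⟨1, by omega⟩, ?_⟩
    simp only [Equiv.apply_symm_apply]
    intro hcon
    have := congrArg Fin.val hcon
    simp only [Fin.val_mk] at this
    omega
  · refine Finset.mem_image.mpr ⟨κ.symm ⟨min (m-1) (r-1), by omega⟩, Finset.mem_univ _, ?_⟩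
    simp only [Equiv.apply_symm_apply]
    apply Fin.ext
    simp only [Fin.val_mk]
    omega
  · intro i hi
    have hir : i.1 < r := i.2
    have him : m ≤ i.1 := by
      by_contra hlt
      push_neg at hlt
      refine hi (Finset.mem_image.mpr ⟨κ.symm ⟨i.1, hlt⟩, Finset.mem_univ _, ?_⟩)
      simp only [Equiv.apply_symm_apply]
      apply Fin.ext
      simp only [Fin.val_mk]
      omega
    refine ⟨μ.symm ⟨i.1 - m, by omega⟩, ?_⟩
    simp only [Equiv.apply_symm_apply]
    apply Fin.ext
    simp only [Fin.val_mk]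
    omega
  · refine ⟨⟨0, by omega⟩, ?_, fun x => ?_⟩
    · intro hcon
      have := congrArg Fin.val hcon
      simp only [Fin.val_mk] at this
      omega
    · intro hcon
      have := congrArg Fin.val hcon
      simp only [Fin.val_mk] at this
      omega

end NcntSection

lemma main_count (r : ℕ) (hr : 2 ≤ r) (F W : Type) [Fintype F] [Fintype W]
    [DecidableEq F] [DecidableEq W]
    (hF : 2 ≤ Fintype.card F) (hk : r ≤ Fintype.card F + Fintype.card W) :
    0 < ((univ : Finset ((F → Fin r) × (W → Fin r))).filter
          fun p => ∃ u v, p.1 u ≠ p.1 v).card ∧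
    0 < ((univ : Finset ((F → Fin r) × (W → Fin r))).filter
          fun p => ¬ ∃ u v, p.1 u ≠ p.1 v).card ∧
    ((univ : Finset ((F → Fin r) × (W → Fin r))).filter
          fun p => (∀ i, (∃ u, p.1 u = i) ∨ (∃ w, p.2 w = i)) ∧ ¬ ∃ u v, p.1 u ≠ p.1 v).card
      * ((univ : Finset ((F → Fin r) × (W → Fin r))).filter
          fun p => ∃ u v, p.1 u ≠ p.1 v).card
      + ((univ : Finset ((F → Fin r) × (W → Fin r))).filter
          fun p => ¬ ∃ u v, p.1 u ≠ p.1 v).card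
      ≤ ((univ : Finset ((F → Fin r) × (W → Fin r))).filter
          fun p => (∀ i, (∃ u, p.1 u = i) ∨ (∃ w, p.2 w = i)) ∧ ∃ u v, p.1 u ≠ p.1 v).card
        * ((univ : Finset ((F → Fin r) × (W → Fin r))).filter
          fun p => ¬ ∃ u v, p.1 u ≠ p.1 v).card ∧
    ((univ : Finset ((F → Fin r) × (W → Fin r))).filter
          fun p => (∀ i, (∃ u, p.1 u = i) ∨ (∃ w, p.2 w = i)) ∧ ∃ u v, p.1 u ≠ p.1 v).card
      + ((univ : Finset ((F → Fin r) × (W → Fin r))).filter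
          fun p => (∀ i, (∃ u, p.1 u = i) ∨ (∃ w, p.2 w = i)) ∧ ¬ ∃ u v, p.1 u ≠ p.1 v).card
      = stirling2 (Fintype.card F + Fintype.card W) r * r.factorial ∧
    ((univ : Finset ((F → Fin r) × (W → Fin r))).filter
          fun p => ∃ u v, p.1 u ≠ p.1 v).card
      + ((univ : Finset ((F → Fin r) × (W → Fin r))).filter
          fun p => ¬ ∃ u v, p.1 u ≠ p.1 v).card
      = r ^ (Fintype.card F + Fintype.card W) := by
  have hr0 : 0 < r := by omega
  have hFpos : 0 < Fintype.card F := by omega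
  have hFne : Nonempty F := Fintype.card_pos_iff.mp hFpos
  obtain ⟨u₀⟩ := hFne
  have hWne : Nonempty (W → Fin r) := ⟨fun _ => ⟨0, hr0⟩⟩
  set ν := Ncnt r W {(⟨0, hr0⟩ : Fin r)} with hν
  have key_iff : ∀ (g : F → Fin r) (h : W → Fin r),
      (∀ i, (∃ u, g u = i) ∨ (∃ w, h w = i)) ↔ ∀ i ∉ Sg g, ∃ w, h w = i := by
    intro g h
    constructor
    · intro hp i his
      rcases hp i with hcase | hcase
      · obtain ⟨u, hu⟩ := hcase
        exact absurd (Finset.mem_image.mpr ⟨u, Finset.mem_univ u, hu⟩) his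
      · exact hcase
    · intro hp i
      by_cases his : i ∈ Sg g
      · obtain ⟨u, -, hu⟩ := Finset.mem_image.mp his
        exact Or.inl ⟨u, hu⟩
      · exact Or.inr (hp i his)
  have hsum : ∀ (Q : (F → Fin r) → Prop) [DecidablePred Q]
      [DecidablePred fun p : (F → Fin r) × (W → Fin r) =>
        (∀ i, (∃ u, p.1 u = i) ∨ (∃ w, p.2 w = i)) ∧ Q p.1],
      ((univ : Finset ((F → Fin r) × (W → Fin r))).filter
        fun p => (∀ i, (∃ u, p.1 u = i) ∨ (∃ w, p.2 w = i)) ∧ Q p.1).card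
        = ∑ g ∈ univ.filter Q, Ncnt r W (Sg g) := by
    intro Q _ _
    rw [Finset.sum_filter, Finset.card_filter, Fintype.sum_prod_type]
    refine Finset.sum_congr rfl fun g _ => ?_
    by_cases hq : Q g
    · rw [if_pos hq]
      unfold Ncnt
      rw [Finset.card_filter]
      refine Finset.sum_congr rfl fun h _ => ?_
      exact if_congr ((and_iff_left hq).trans (key_iff g h)) rfl rfl
    · rw [if_neg hq]
      exact Finset.sum_eq_zero fun h _ => if_neg fun hc => hq hc.2
  have hBprod : ∀ (Q : (F → Fin r) → Prop) [DecidablePred Q]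
      [DecidablePred fun p : (F → Fin r) × (W → Fin r) => Q p.1],
      ((univ : Finset ((F → Fin r) × (W → Fin r))).filter fun p => Q p.1).card
        = (univ.filter Q).card * Fintype.card (W → Fin r) := by
    intro Q _ _
    exact card_filter_fst Q
  have hconstcard : ((univ : Finset (F → Fin r)).filter fun g => ¬ ∃ u v, g u ≠ g v).card
      = r := by
    have h1 : ((univ : Finset (F → Fin r)).filter fun g => ¬ ∃ u v, g u ≠ g v).card
        = (univ : Finset (Fin r)).card := by
      apply Finset.card_bij' (fun g _ => g u₀) (fun c _ => fun _ => c)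
      · intro g _; exact Finset.mem_univ _
      · intro c _
        simp only [Finset.mem_filter, Finset.mem_univ, true_and]
        rintro ⟨u, v, hc⟩
        exact hc rfl
      · intro g hg
        simp only [Finset.mem_filter, Finset.mem_univ, true_and] at hg
        push_neg at hg
        funext u
        exact hg u₀ u
      · intro c _; rfl
    rw [h1, Finset.card_univ, Fintype.card_fin]
  have hSgconst : ∀ g : F → Fin r, (¬ ∃ u v, g u ≠ g v) → Sg g = {g u₀} := by
    intro g hg
    push_neg at hg
    apply Finset.Subset.antisymm
    · intro i hi
      obtain ⟨u, -, hu⟩ := Finset.mem_image.mp hi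
      simp [← hu, hg u u₀]
    · intro i hi
      rw [Finset.mem_singleton] at hi
      exact Finset.mem_image.mpr ⟨u₀, Finset.mem_univ _, hi.symm⟩
  have hconstsum : ∑ g ∈ univ.filter (fun g : F → Fin r => ¬ ∃ u v, g u ≠ g v), Ncnt r W (Sg g)
      = r * ν := by
    rw [Finset.sum_congr rfl (fun g hg => by
      rw [hSgconst g (Finset.mem_filter.mp hg).2, Ncnt_swap r W (g u₀) ⟨0, hr0⟩])]
    rw [Finset.sum_const, hconstcard, smul_eq_mul]
  obtain ⟨g₀, cst, h₀, hg₀ne, hcst, hhit, i₁, hi₁ne, hi₁miss⟩ :=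
    exists_good r hr F W hF hk
  have hK1 : ∀ g : F → Fin r, ν ≤ Ncnt r W (Sg g) := by
    intro g
    have hmem : g u₀ ∈ Sg g := Finset.mem_image.mpr ⟨u₀, Finset.mem_univ _, rfl⟩
    rw [hν, Ncnt_swap r W ⟨0, hr0⟩ (g u₀)]
    exact Ncnt_mono r W (Finset.singleton_subset_iff.mpr hmem)
  have hKlt : ν < Ncnt r W (Sg g₀) := by
    rw [hν, Ncnt_swap r W ⟨0, hr0⟩ cst]
    apply Finset.card_lt_card
    rw [Finset.ssubset_iff_of_subset (Finset.monotone_filter_right _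
      (fun h _ hh i hit => hh i fun hc => hit (Finset.singleton_subset_iff.mpr hcst hc)))]
    refine ⟨h₀, ?_, ?_⟩
    · simp only [Finset.mem_filter, Finset.mem_univ, true_and]
      exact fun i hi => hhit i hi
    · simp only [Finset.mem_filter, Finset.mem_univ, true_and]
      intro hcon
      obtain ⟨x, hx⟩ := hcon i₁ (by simpa using hi₁ne)
      exact hi₁miss x hx
  have hg₀mem : g₀ ∈ (univ : Finset (F → Fin r)).filter fun g => ∃ u v, g u ≠ g v :=
    Finset.mem_filter.mpr ⟨Finset.mem_univ _, hg₀ne⟩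
  have hGnpos : 0 < ((univ : Finset (F → Fin r)).filter fun g => ∃ u v, g u ≠ g v).card :=
    Finset.card_pos.mpr ⟨g₀, hg₀mem⟩
  have hQWpos : 0 < Fintype.card (W → Fin r) := Fintype.card_pos
  have halow : ((univ : Finset (F → Fin r)).filter fun g => ∃ u v, g u ≠ g v).card * ν + 1
      ≤ ∑ g ∈ univ.filter (fun g : F → Fin r => ∃ u v, g u ≠ g v), Ncnt r W (Sg g) := by
    have hlt := Finset.sum_lt_sum (s := univ.filter (fun g : F → Fin r => ∃ u v, g u ≠ g v))
      (f := fun _ => ν) (g := fun g => Ncnt r W (Sg g))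
      (fun i _ => hK1 i) ⟨g₀, hg₀mem, hKlt⟩
    rw [Finset.sum_const, smul_eq_mul] at hlt
    exact Nat.succ_le_of_lt hlt
  have ha := hsum (fun g => ∃ u v, g u ≠ g v)
  have hc := hsum (fun g => ¬ ∃ u v, g u ≠ g v)
  have hb := hBprod (fun g => ∃ u v, g u ≠ g v)
  have hd := hBprod (fun g => ¬ ∃ u v, g u ≠ g v)
  rw [hconstsum] at hc
  refine ⟨?_, ?_, ?_, ?_, ?_⟩
  · rw [hb]; exact Nat.mul_pos hGnpos hQWpos
  · rw [hd, hconstcard]; exact Nat.mul_pos hr0 hQWpos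
  · rw [ha, hb, hc, hd, hconstcard]
    calc r * ν * (((univ : Finset (F → Fin r)).filter fun g => ∃ u v, g u ≠ g v).card
            * Fintype.card (W → Fin r)) + r * Fintype.card (W → Fin r)
        = (((univ : Finset (F → Fin r)).filter fun g => ∃ u v, g u ≠ g v).card * ν + 1)
            * (r * Fintype.card (W → Fin r)) := by ring
      _ ≤ (∑ g ∈ univ.filter (fun g : F → Fin r => ∃ u v, g u ≠ g v), Ncnt r W (Sg g))
            * (r * Fintype.card (W → Fin r)) := Nat.mul_le_mul_right _ halow
  · rw [ha, hc]
    have hall : (∑ g ∈ univ.filter (fun g : F → Fin r => ∃ u v, g u ≠ g v), Ncnt r W (Sg g))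
        + r * ν = ∑ g : F → Fin r, Ncnt r W (Sg g) := by
      rw [← hconstsum]
      exact Finset.sum_filter_add_sum_filter_not univ _ _
    rw [hall]
    have hAcard : (∑ g : F → Fin r, Ncnt r W (Sg g))
        = ((univ : Finset ((F → Fin r) × (W → Fin r))).filter
            fun p => ∀ i, (∃ u, p.1 u = i) ∨ (∃ w, p.2 w = i)).card := by
      rw [Finset.card_filter, Fintype.sum_prod_type]
      refine Finset.sum_congr rfl fun g _ => ?_
      unfold Ncnt
      rw [Finset.card_filter]
      refine Finset.sum_congr rfl fun h _ => ?_
      exact if_congr (key_iff g h).symm rfl rfl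
    rw [hAcard]
    have hEq : ((univ : Finset ((F → Fin r) × (W → Fin r))).filter
          fun p => ∀ i, (∃ u, p.1 u = i) ∨ (∃ w, p.2 w = i)).card
        = ((univ : Finset ((F ⊕ W) → Fin r)).filter fun q => Function.Surjective q).card := by
      rw [← card_filter_equiv (Equiv.sumArrowEquivProdArrow F W (Fin r))
        (fun p => ∀ i, (∃ u, p.1 u = i) ∨ (∃ w, p.2 w = i))]
      refine congrArg Finset.card (Finset.filter_congr fun q _ => ?_)
      constructor
      · intro hp i
        rcases hp i with ⟨u, hu⟩ | ⟨w, hw⟩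
        · exact ⟨Sum.inl u, hu⟩
        · exact ⟨Sum.inr w, hw⟩
      · intro hs i
        obtain ⟨x, hx⟩ := hs i
        cases x with
        | inl u => exact Or.inl ⟨u, hx⟩
        | inr w => exact Or.inr ⟨w, hx⟩
    rw [hEq, card_surj' (F ⊕ W) r, Fintype.card_sum]
  · rw [hb, hd, hconstcard, ← Nat.add_mul]
    have h5 := Finset.card_filter_add_card_filter_not
      (s := (univ : Finset (F → Fin r))) (p := fun g => ∃ u v, g u ≠ g v)
    rw [hconstcard, Finset.card_univ, Fintype.card_fun, Fintype.card_fin] at h5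
    rw [h5, Fintype.card_fun, Fintype.card_fin, ← pow_add]

def splitE {V : Type} [DecidableEq V] (e f : Finset V) (hfe : f ⊆ e) (r : ℕ) :
    (V → Fin r) ≃ (((↥f → Fin r) × (↥(e \ f) → Fin r)) × ({v : V // v ∉ e} → Fin r)) where
  toFun ω := ((fun u => ω u, fun w => ω w), fun x => ω x)
  invFun q v :=
    if h1 : v ∈ f then q.1.1 ⟨v, h1⟩
    else if h2 : v ∈ e then q.1.2 ⟨v, Finset.mem_sdiff.mpr ⟨h2, h1⟩⟩
    else q.2 ⟨v, h2⟩
  left_inv ω := by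
    funext v
    by_cases h1 : v ∈ f
    · simp [h1]
    · by_cases h2 : v ∈ e <;> simp [h1, h2]
  right_inv q := by
    obtain ⟨⟨g, h⟩, h'⟩ := q
    simp only [Prod.mk.injEq]
    refine ⟨⟨?_, ?_⟩, ?_⟩
    · funext u
      rw [dif_pos u.2]
    · funext w
      have hw := Finset.mem_sdiff.mp w.2
      rw [dif_neg hw.2, dif_pos hw.1]
    · funext x
      have hx := x.2
      rw [dif_neg (fun hc : (x : V) ∈ f => hx (hfe hc)), dif_neg hx]


/-- For a uniformly random r-cut, an edge e of size k, and f ⊆ e with |f| ≥ 2: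
conditioning on f receiving at least 2 colours strictly increases the probability
that e is multicoloured, and the conditional probability is at least
S(k,r)·r!/r^k + c for a constant c = c(k,r) > 0. -/
theorem stmt_17 (k r : ℕ) (hr : 2 ≤ r) (hk : r ≤ k) :
    ∃ c : ℚ, 0 < c ∧
      ∀ (V : Type) [Fintype V] [DecidableEq V] (e f : Finset V),
        e.card = k → f ⊆ e → 2 ≤ f.card →
        ((((Finset.univ : Finset (V → Fin r)).filter
              (fun ω => (∀ i : Fin r, ∃ v ∈ e, ω v = i)
                ∧ ∃ u ∈ f, ∃ v ∈ f, ω u ≠ ω v)).card : ℚ)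
            / (((Finset.univ : Finset (V → Fin r)).filter
              (fun ω => ∃ u ∈ f, ∃ v ∈ f, ω u ≠ ω v)).card : ℚ)
          > (((Finset.univ : Finset (V → Fin r)).filter
              (fun ω => (∀ i : Fin r, ∃ v ∈ e, ω v = i)
                ∧ ¬ ∃ u ∈ f, ∃ v ∈ f, ω u ≠ ω v)).card : ℚ)
            / (((Finset.univ : Finset (V → Fin r)).filter
              (fun ω => ¬ ∃ u ∈ f, ∃ v ∈ f, ω u ≠ ω v)).card : ℚ))
        ∧ (((Finset.univ : Finset (V → Fin r)).filter
              (fun ω => (∀ i : Fin r, ∃ v ∈ e, ω v = i)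
                ∧ ∃ u ∈ f, ∃ v ∈ f, ω u ≠ ω v)).card : ℚ)
            / (((Finset.univ : Finset (V → Fin r)).filter
              (fun ω => ∃ u ∈ f, ∃ v ∈ f, ω u ≠ ω v)).card : ℚ)
          ≥ (stirling2 k r * r.factorial : ℚ) / (r : ℚ) ^ k + c := by
  have hr0 : 0 < r := by omega
  refine ⟨((r:ℚ)^k * (r:ℚ)^k)⁻¹, by positivity, ?_⟩
  intro V _ _ e f hek hfe hf2
  have hFinr : Nonempty (Fin r) := ⟨⟨0, hr0⟩⟩
  have hmk : f.card ≤ k := hek ▸ Finset.card_le_card hfe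
  have hcF : Fintype.card ↥f = f.card := Fintype.card_coe f
  have hcW : Fintype.card ↥(e \ f) = k - f.card := by
    rw [Fintype.card_coe, Finset.card_sdiff_of_subset hfe, hek]
  have hsumk : Fintype.card ↥f + Fintype.card ↥(e \ f) = k := by rw [hcF, hcW]; omega
  -- generic card transfer
  have hcards : ∀ (P : (V → Fin r) → Prop)
      (R : ((↥f → Fin r) × (↥(e \ f) → Fin r)) → Prop)
      [DecidablePred P] [DecidablePred R]
      [DecidablePred fun ω : V → Fin r => R ((splitE e f hfe r) ω).1]
      [DecidablePred fun q : ((↥f → Fin r) × (↥(e \ f) → Fin r)) × ({v : V // v ∉ e} → Fin r)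
          => R q.1],
      (∀ ω, P ω ↔ R ((splitE e f hfe r) ω).1) →
      ((univ : Finset (V → Fin r)).filter P).card
        = ((univ : Finset ((↥f → Fin r) × (↥(e \ f) → Fin r))).filter R).card
            * Fintype.card ({v : V // v ∉ e} → Fin r) := by
    intro P R _ _ _ _ hiff
    calc ((univ : Finset (V → Fin r)).filter P).card
        = ((univ : Finset (V → Fin r)).filter
            fun ω => R ((splitE e f hfe r) ω).1).card :=
          congrArg Finset.card (Finset.filter_congr fun ω _ => hiff ω)
      _ = ((univ : Finset (((↥f → Fin r) × (↥(e \ f) → Fin r))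
              × ({v : V // v ∉ e} → Fin r))).filter fun q => R q.1).card :=
          card_filter_equiv (splitE e f hfe r) (fun q => R q.1)
      _ = _ := card_filter_fst R
  -- pointwise iffs
  have hiffA : ∀ ω : V → Fin r, (∀ i : Fin r, ∃ v ∈ e, ω v = i) ↔
      (∀ i : Fin r, (∃ u : ↥f, ((splitE e f hfe r) ω).1.1 u = i)
        ∨ (∃ w : ↥(e \ f), ((splitE e f hfe r) ω).1.2 w = i)) := by
    intro ω
    constructor
    · intro hA i
      obtain ⟨v, hv, hvi⟩ := hA i
      by_cases hvf : v ∈ f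
      · exact Or.inl ⟨⟨v, hvf⟩, hvi⟩
      · exact Or.inr ⟨⟨v, Finset.mem_sdiff.mpr ⟨hv, hvf⟩⟩, hvi⟩
    · intro hA i
      rcases hA i with ⟨u, hu⟩ | ⟨w, hw⟩
      · exact ⟨↑u, hfe u.2, hu⟩
      · exact ⟨↑w, (Finset.mem_sdiff.mp w.2).1, hw⟩
  have hiffB : ∀ ω : V → Fin r, (∃ u ∈ f, ∃ v ∈ f, ω u ≠ ω v) ↔
      (∃ u v : ↥f, ((splitE e f hfe r) ω).1.1 u ≠ ((splitE e f hfe r) ω).1.1 v) := by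
    intro ω
    constructor
    · rintro ⟨u, hu, v, hv, hne⟩
      exact ⟨⟨u, hu⟩, ⟨v, hv⟩, hne⟩
    · rintro ⟨u, v, hne⟩
      exact ⟨↑u, u.2, ↑v, v.2, hne⟩
  -- the four card identities
  have h1 : ((Finset.univ : Finset (V → Fin r)).filter
        (fun ω => (∀ i : Fin r, ∃ v ∈ e, ω v = i) ∧ ∃ u ∈ f, ∃ v ∈ f, ω u ≠ ω v)).card
      = ((univ : Finset ((↥f → Fin r) × (↥(e \ f) → Fin r))).filter
          fun p => (∀ i, (∃ u, p.1 u = i) ∨ (∃ w, p.2 w = i)) ∧ ∃ u v, p.1 u ≠ p.1 v).card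
        * Fintype.card ({v : V // v ∉ e} → Fin r) :=
    hcards _ _ fun ω => and_congr (hiffA ω) (hiffB ω)
  have h2 : ((Finset.univ : Finset (V → Fin r)).filter
        (fun ω => ∃ u ∈ f, ∃ v ∈ f, ω u ≠ ω v)).card
      = ((univ : Finset ((↥f → Fin r) × (↥(e \ f) → Fin r))).filter
          fun p => ∃ u v, p.1 u ≠ p.1 v).card
        * Fintype.card ({v : V // v ∉ e} → Fin r) :=
    hcards _ _ fun ω => hiffB ω
  have h3 : ((Finset.univ : Finset (V → Fin r)).filter
        (fun ω => (∀ i : Fin r, ∃ v ∈ e, ω v = i) ∧ ¬ ∃ u ∈ f, ∃ v ∈ f, ω u ≠ ω v)).card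
      = ((univ : Finset ((↥f → Fin r) × (↥(e \ f) → Fin r))).filter
          fun p => (∀ i, (∃ u, p.1 u = i) ∨ (∃ w, p.2 w = i)) ∧ ¬ ∃ u v, p.1 u ≠ p.1 v).card
        * Fintype.card ({v : V // v ∉ e} → Fin r) :=
    hcards _ _ fun ω => and_congr (hiffA ω) (not_congr (hiffB ω))
  have h4 : ((Finset.univ : Finset (V → Fin r)).filter
        (fun ω => ¬ ∃ u ∈ f, ∃ v ∈ f, ω u ≠ ω v)).card
      = ((univ : Finset ((↥f → Fin r) × (↥(e \ f) → Fin r))).filter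
          fun p => ¬ ∃ u v, p.1 u ≠ p.1 v).card
        * Fintype.card ({v : V // v ∉ e} → Fin r) :=
    hcards _ _ fun ω => not_congr (hiffB ω)
  obtain ⟨hbpos, hdpos, hmain, hsurj, htot⟩ :=
    main_count r hr (↥f) (↥(e \ f)) (by rw [hcF]; exact hf2) (by rw [hsumk]; exact hk)
  rw [hsumk] at hsurj htot
  rw [h1, h2, h3, h4]
  set Q := Fintype.card ({v : V // v ∉ e} → Fin r) with hQdef
  have hQpos : 0 < Q := Fintype.card_pos
  set a := ((univ : Finset ((↥f → Fin r) × (↥(e \ f) → Fin r))).filter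
      fun p => (∀ i, (∃ u, p.1 u = i) ∨ (∃ w, p.2 w = i)) ∧ ∃ u v, p.1 u ≠ p.1 v).card with hadef
  set b := ((univ : Finset ((↥f → Fin r) × (↥(e \ f) → Fin r))).filter
      fun p => ∃ u v, p.1 u ≠ p.1 v).card with hbdef
  set c := ((univ : Finset ((↥f → Fin r) × (↥(e \ f) → Fin r))).filter
      fun p => (∀ i, (∃ u, p.1 u = i) ∨ (∃ w, p.2 w = i)) ∧ ¬ ∃ u v, p.1 u ≠ p.1 v).card with hcdef
  set d := ((univ : Finset ((↥f → Fin r) × (↥(e \ f) → Fin r))).filter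
      fun p => ¬ ∃ u v, p.1 u ≠ p.1 v).card with hddef
  clear_value Q a b c d
  clear h1 h2 h3 h4 hcards hiffA hiffB hQdef hadef hbdef hcdef hddef hcF hcW hsumk hmk hFinr
  constructor
  · -- strict inequality
    have hbQ : (0:ℚ) < ((b * Q : ℕ) : ℚ) := by
      exact_mod_cast Nat.mul_pos hbpos hQpos
    have hdQ : (0:ℚ) < ((d * Q : ℕ) : ℚ) := by
      exact_mod_cast Nat.mul_pos hdpos hQpos
    rw [gt_iff_lt, div_lt_div_iff₀ hdQ hbQ]
    have hnat : (c * Q) * (b * Q) < (a * Q) * (d * Q) := by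
      have hab : c * b < a * d := by omega
      calc (c * Q) * (b * Q) = (c * b) * (Q * Q) := by ring
        _ < (a * d) * (Q * Q) := by
            exact Nat.mul_lt_mul_of_lt_of_le hab (le_refl _) (Nat.mul_pos hQpos hQpos)
        _ = (a * Q) * (d * Q) := by ring
    exact_mod_cast hnat
  · -- quantitative inequality
    have hQne : ((Q : ℚ)) ≠ 0 := by
      exact_mod_cast Nat.pos_iff_ne_zero.mp hQpos
    rw [ge_iff_le, Nat.cast_mul, Nat.cast_mul, mul_div_mul_right _ _ hQne]
    have hTR : (stirling2 k r : ℚ) * (r.factorial : ℚ) = ((a + c : ℕ) : ℚ) := by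
      rw [hsurj]; push_cast; ring
    have hRk : ((r:ℚ)) ^ k = ((b + d : ℕ) : ℚ) := by
      rw [htot]; push_cast; ring
    rw [hTR, hRk]
    have hbq : (0:ℚ) < (b : ℚ) := by exact_mod_cast hbpos
    have hBD : (0:ℚ) < ((b + d : ℕ) : ℚ) := by
      have : 0 < b + d := by omega
      exact_mod_cast this
    have hnatkey : b * ((a + c) * (b + d) + 1) ≤ a * ((b + d) * (b + d)) := by
      nlinarith [Nat.mul_le_mul_right b hmain, Nat.mul_le_mul_right d hmain,
        Nat.le_mul_of_pos_left b hdpos, hbpos, hdpos]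
    have hkey : (b:ℚ) * (((a + c : ℕ):ℚ) * ((b + d : ℕ):ℚ) + 1)
        ≤ (a:ℚ) * (((b + d : ℕ):ℚ) * ((b + d : ℕ):ℚ)) := by
      exact_mod_cast hnatkey
    have hcomb : ((a + c : ℕ):ℚ) / ((b + d : ℕ):ℚ)
          + (((b + d : ℕ):ℚ) * ((b + d : ℕ):ℚ))⁻¹
        = (((a + c : ℕ):ℚ) * ((b + d : ℕ):ℚ) + 1) / (((b + d : ℕ):ℚ) * ((b + d : ℕ):ℚ)) := by
      have hYne : (((b + d : ℕ):ℚ)) ≠ 0 := ne_of_gt hBD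
      rw [inv_eq_one_div, div_add_div _ _ hYne (mul_ne_zero hYne hYne),
        div_eq_div_iff (mul_ne_zero hYne (mul_ne_zero hYne hYne)) (mul_ne_zero hYne hYne)]
      ring
    rw [hcomb, div_le_div_iff₀ (mul_pos hBD hBD) hbq]
    linarith [hkey]
end

section
/- Let G be a multigraph with m edges and maximum degree Δ. In a uniformly random ordering of the vertices, let d_<(v) be the number of edges from v to vertices preceding it. Then E[Σ_v √(d_<(v))] ≥ (1/2)·Σ_v √(deg(v)) ≥ m/(2√Δ). -/
open scoped Classical

lemma my_sqrt_add_le (a b : ℝ) (ha : 0 ≤ a) (hb : 0 ≤ b) :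
    Real.sqrt (a + b) ≤ Real.sqrt a + Real.sqrt b := by
  have h1 := Real.sq_sqrt ha
  have h2 := Real.sq_sqrt hb
  have h3 := Real.sqrt_nonneg a
  have h4 := Real.sqrt_nonneg b
  have h : Real.sqrt (a + b) ≤ Real.sqrt ((Real.sqrt a + Real.sqrt b) ^ 2) :=
    Real.sqrt_le_sqrt (by nlinarith [mul_nonneg h3 h4])
  rwa [Real.sqrt_sq (by positivity)] at h

lemma my_countP_split {α : Type*} (s : Multiset α) (p q r : α → Prop)
    [DecidablePred p] [DecidablePred q] [DecidablePred r]
    (h : ∀ a ∈ s, (r a ↔ p a ∨ q a) ∧ ¬(p a ∧ q a)) :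
    s.countP p + s.countP q = s.countP r := by
  induction s using Multiset.induction_on with
  | empty => simp
  | cons a s ih =>
    have ha := h a (Multiset.mem_cons_self a s)
    have ih' := ih (fun b hb => h b (Multiset.mem_cons_of_mem hb))
    simp only [Multiset.countP_cons]
    by_cases hp : p a <;> by_cases hq : q a
    · exact absurd ⟨hp, hq⟩ ha.2
    · have hr : r a := ha.1.mpr (Or.inl hp)
      simp only [hp, hq, hr, if_true, if_false]; omega
    · have hr : r a := ha.1.mpr (Or.inr hq)
      simp only [hp, hq, hr, if_true, if_false]; omega
    · have hr : ¬ r a := fun hr => by rcases ha.1.mp hr with h' | h' <;> tauto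
      simp only [hp, hq, hr, if_true, if_false]; omega

lemma my_sum_countP_eq {V : Type*} [Fintype V] [DecidableEq V]
    (s : Multiset (V × V)) (f : V × V → V) :
    ∑ v : V, s.countP (fun p => f p = v) = Multiset.card s := by
  induction s using Multiset.induction_on with
  | empty => simp
  | cons a s ih =>
    simp only [Multiset.countP_cons, Finset.sum_add_distrib, ih,
      Multiset.card_cons]
    rw [Finset.sum_ite_eq Finset.univ (f a) (fun _ => 1)]
    simp [add_comm]

/-- For a multigraph with m edges and maximum degree Δ, in a uniformly random
vertex ordering, E[Σ_v √(d_<(v))] ≥ (1/2)·Σ_v √(deg v) ≥ m/(2√Δ). -/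
theorem stmt_18 {V : Type*} [Fintype V] [DecidableEq V]
    (G : Multiset (V × V)) (hloop : ∀ p ∈ G, p.1 ≠ p.2) (Δ : ℕ)
    (hΔ : ∀ v : V, G.countP (fun p => p.1 = v ∨ p.2 = v) ≤ Δ) :
    (∑ σ : V ≃ Fin (Fintype.card V), ∑ v : V,
          Real.sqrt (G.countP
            (fun p => (p.1 = v ∧ σ p.2 < σ v) ∨ (p.2 = v ∧ σ p.1 < σ v))))
        / (Fintype.card V).factorial
      ≥ (1 / 2) * ∑ v : V, Real.sqrt (G.countP (fun p => p.1 = v ∨ p.2 = v))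
    ∧ (1 / 2) * ∑ v : V, Real.sqrt (G.countP (fun p => p.1 = v ∨ p.2 = v))
      ≥ (Multiset.card G : ℝ) / (2 * Real.sqrt Δ) := by
  set n := Fintype.card V with hn
  set deg : V → ℕ := fun v => G.countP (fun p => p.1 = v ∨ p.2 = v) with hdeg
  set d : (V ≃ Fin n) → V → ℕ := fun σ v => G.countP
      (fun p => (p.1 = v ∧ σ p.2 < σ v) ∨ (p.2 = v ∧ σ p.1 < σ v)) with hd
  -- degree sum = 2 * card G
  have hdegsum : ∑ v : V, deg v = 2 * Multiset.card G := by
    have h1 : ∀ v : V, G.countP (fun p => p.1 = v) + G.countP (fun p => p.2 = v)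
        = deg v := by
      intro v
      rw [hdeg]
      apply my_countP_split
      intro p hp
      have := hloop p hp
      constructor
      · tauto
      · rintro ⟨h1, h2⟩; exact this (h1.trans h2.symm)
    calc ∑ v : V, deg v
        = ∑ v : V, (G.countP (fun p => p.1 = v) + G.countP (fun p => p.2 = v)) := by
          simp_rw [h1]
      _ = (∑ v : V, G.countP (fun p => (fun q : V × V => q.1) p = v))
          + ∑ v : V, G.countP (fun p => (fun q : V × V => q.2) p = v) := by
          rw [← Finset.sum_add_distrib]
      _ = 2 * Multiset.card G := by
          rw [my_sum_countP_eq, my_sum_countP_eq]; ring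
  -- reversal key identity
  have key : ∀ (σ : V ≃ Fin n) (v : V),
      d σ v + d (σ.trans Fin.revPerm) v = deg v := by
    intro σ v
    rw [hdeg, hd]
    apply my_countP_split
    intro p hp
    have hne := hloop p hp
    simp only [Equiv.trans_apply, Fin.revPerm_apply, Fin.rev_lt_rev]
    constructor
    · constructor
      · rintro (h | h)
        · have h2 : p.2 ≠ v := fun hc => hne (h.trans hc.symm)
          rcases lt_or_gt_of_ne (fun hc : σ p.2 = σ v => h2 (σ.injective hc))
            with hlt | hlt
          · exact Or.inl (Or.inl ⟨h, hlt⟩)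
          · exact Or.inr (Or.inl ⟨h, hlt⟩)
        · have h2 : p.1 ≠ v := fun hc => hne (hc.trans h.symm)
          rcases lt_or_gt_of_ne (fun hc : σ p.1 = σ v => h2 (σ.injective hc))
            with hlt | hlt
          · exact Or.inl (Or.inr ⟨h, hlt⟩)
          · exact Or.inr (Or.inr ⟨h, hlt⟩)
      · rintro ((⟨h, -⟩ | ⟨h, -⟩) | (⟨h, -⟩ | ⟨h, -⟩))
        · exact Or.inl h
        · exact Or.inr h
        · exact Or.inl h
        · exact Or.inr h
    · rintro ⟨h1 | h1, h2 | h2⟩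
      · exact lt_asymm h1.2 h2.2
      · exact hne (h1.1.trans h2.1.symm)
      · exact hne (h2.1.trans h1.1.symm)
      · exact lt_asymm h1.2 h2.2
  have hfact : (0 : ℝ) < (n.factorial : ℝ) := by
    exact_mod_cast Nat.factorial_pos n
  -- Part 1
  have part1 : (∑ σ : V ≃ Fin n, ∑ v : V, Real.sqrt (d σ v)) / n.factorial
      ≥ (1 / 2) * ∑ v : V, Real.sqrt (deg v) := by
    set S : ℝ := ∑ σ : V ≃ Fin n, ∑ v : V, Real.sqrt (d σ v) with hS
    have hrevinv : ∀ σ : V ≃ Fin n, (σ.trans Fin.revPerm).trans Fin.revPerm = σ := by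
      intro σ; ext x; simp [Fin.rev_rev]
    have hre : (∑ σ : V ≃ Fin n, ∑ v : V, Real.sqrt (d (σ.trans Fin.revPerm) v)) = S := by
      rw [hS]
      exact Equiv.sum_comp
        (⟨fun σ => σ.trans Fin.revPerm, fun σ => σ.trans Fin.revPerm, hrevinv, hrevinv⟩ :
          (V ≃ Fin n) ≃ (V ≃ Fin n))
        (fun σ => ∑ v : V, Real.sqrt (d σ v))
    have h2S : 2 * S ≥ (n.factorial : ℝ) * ∑ v : V, Real.sqrt (deg v) := by
      have := Fintype.card_equiv (Fintype.equivFin V)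
      calc 2 * S = S + S := by ring
        _ = ∑ σ : V ≃ Fin n, (∑ v : V, Real.sqrt (d σ v)
              + ∑ v : V, Real.sqrt (d (σ.trans Fin.revPerm) v)) := by
            rw [Finset.sum_add_distrib, hre]
        _ = ∑ σ : V ≃ Fin n, ∑ v : V,
              (Real.sqrt (d σ v) + Real.sqrt (d (σ.trans Fin.revPerm) v)) := by
            simp_rw [Finset.sum_add_distrib]
        _ ≥ ∑ σ : V ≃ Fin n, ∑ v : V, Real.sqrt (deg v) := by
            apply Finset.sum_le_sum; intro σ _
            apply Finset.sum_le_sum; intro v _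
            have := key σ v
            calc Real.sqrt (deg v)
                = Real.sqrt ((d σ v : ℝ) + (d (σ.trans Fin.revPerm) v : ℝ)) := by
                  rw [← this]; push_cast; ring_nf
              _ ≤ _ := my_sqrt_add_le _ _ (by positivity) (by positivity)
        _ = (n.factorial : ℝ) * ∑ v : V, Real.sqrt (deg v) := by
            rw [Finset.sum_const, Finset.card_univ, this]
            simp [nsmul_eq_mul, hn]
    rw [ge_iff_le, le_div_iff₀ hfact]
    linarith
  refine ⟨part1, ?_⟩
  -- Part 2
  by_cases hΔ0 : Δ = 0
  · subst hΔ0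
    simp only [Nat.cast_zero, Real.sqrt_zero, mul_zero, div_zero]
    have : (0 : ℝ) ≤ ∑ v : V, Real.sqrt (deg v) :=
      Finset.sum_nonneg fun v _ => Real.sqrt_nonneg _
    linarith
  · have hΔpos : (0 : ℝ) < Real.sqrt Δ := by
      apply Real.sqrt_pos.mpr
      exact_mod_cast Nat.pos_of_ne_zero hΔ0
    have hterm : ∀ v : V, (deg v : ℝ) / Real.sqrt Δ ≤ Real.sqrt (deg v) := by
      intro v
      rw [div_le_iff₀ hΔpos]
      have h1 : (deg v : ℝ) ≤ Real.sqrt (deg v * Δ) := by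
        rw [show ((deg v : ℝ) * Δ) = (deg v) * (Δ : ℝ) from rfl]
        calc (deg v : ℝ) = Real.sqrt ((deg v : ℝ) * (deg v : ℝ)) := by
              rw [Real.sqrt_mul_self (by positivity)]
          _ ≤ Real.sqrt ((deg v : ℝ) * Δ) := by
              apply Real.sqrt_le_sqrt
              have : (deg v : ℝ) ≤ Δ := by exact_mod_cast hΔ v
              nlinarith [Nat.cast_nonneg (α := ℝ) (deg v)]
      rwa [Real.sqrt_mul (by positivity) (Δ : ℝ)] at h1
    have hsum : (2 * Multiset.card G : ℝ) / Real.sqrt Δ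
        ≤ ∑ v : V, Real.sqrt (deg v) := by
      calc (2 * Multiset.card G : ℝ) / Real.sqrt Δ
          = (∑ v : V, (deg v : ℝ)) / Real.sqrt Δ := by
            congr 1
            rw [← Nat.cast_sum]
            exact_mod_cast congrArg (Nat.cast (R := ℝ)) hdegsum.symm
        _ = ∑ v : V, (deg v : ℝ) / Real.sqrt Δ := Finset.sum_div _ _ _
        _ ≤ _ := Finset.sum_le_sum fun v _ => hterm v
    rw [ge_iff_le, div_le_iff₀ (by positivity)]
    have := hsum
    rw [div_le_iff₀ hΔpos] at this
    nlinarith [Real.sqrt_nonneg (Δ : ℝ)]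
end
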